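/- arXiv:2211.05893 — 3 statements merged into one kernel-verified Lean document; each statement's English description precedes it below -/
import Mathlib

section
/- Theorem 2.1, Hamiltonian part: Suppose (u_h, q_h, p_h) satisfy the semidiscrete DG scheme with zero source, with u_h and q_h depending differentiably on t and numerical traces û_h = {u_h}, q̂_h = {q_h} + τ_qu ⟦u_h⟧, p̂_h = {p_h} + τ_pu ⟦u_h⟧ at every node, where the (node-independent) parameters τ_qu, τ_pu : [0,T] → ℝ satisfy at every t: τ_pu Σ_{i=1}^N ⟦p_h⟧⟦u_h⟧(x_i) + ε τ_qu Σ_{i=1}^N ⟦∂_t u_h⟧⟦u_h⟧(x_i) = 0. Then the discrete Hamiltonian t ↦ Σ_{i=1}^N ∫_{I_i} ( (ε/2) q_h(x,t)² − V(u_h(x,t)) ) dx is constant on [0,T]. -/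
open Polynomial Set

noncomputable section

namespace DG

/-- A broken polynomial function in `W_h^k` (before imposing the degree bound):
the polynomial indexed by `i` is the restriction of the function to
element `I_i = (x (i-1), x i)`, for `i = 1,…,N`. -/
abbrev Broken := ℕ → Polynomial ℝ

/-- Membership in `W_h^k`: every elementwise polynomial has degree at most `k`. -/
def DegLE (k : ℕ) (P : Broken) : Prop := ∀ i, (P i).natDegree ≤ k

/-- `(F, G) = Σ_{i=1}^N ∫_{I_i} F_i G_i dx` for families of functions on the elements. -/
def ip (x : ℕ → ℝ) (N : ℕ) (F G : ℕ → ℝ → ℝ) : ℝ :=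
  ∑ i ∈ Finset.Icc 1 N, ∫ y in (x (i-1))..(x i), F i y * G i y

/-- the family of real functions determined by a broken polynomial -/
def ev (P : Broken) : ℕ → ℝ → ℝ := fun i y => (P i).eval y

/-- elementwise spatial derivative -/
def dx (P : Broken) : Broken := fun i => (P i).derivative

/-- `⟨φ̂, v n⟩ = Σ_{i=1}^N [φ̂(x_i) v(x_i⁻) - φ̂(x_{i-1}) v(x_{i-1}⁺)]` where `φ̂` is a
numerical trace, i.e. a function on the node indices. -/
def bt (x : ℕ → ℝ) (N : ℕ) (φ : ℕ → ℝ) (v : Broken) : ℝ :=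
  ∑ i ∈ Finset.Icc 1 N, (φ i * (v i).eval (x i) - φ (i - 1) * (v i).eval (x (i - 1)))

/-- the one-sided limit `ζ(x_i⁻)` of a broken polynomial at the node `x_i`, `i = 1,…,N` -/
def lv (x : ℕ → ℝ) (P : Broken) (i : ℕ) : ℝ := (P i).eval (x i)

/-- the one-sided limit `ζ(x_i⁺)` at the node `x_i`, with the periodic identification
`ζ(x_N⁺) = ζ(x_0⁺)` -/
def rv (x : ℕ → ℝ) (N : ℕ) (P : Broken) (i : ℕ) : ℝ :=
  if i = N then (P 1).eval (x 0) else (P (i + 1)).eval (x i)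

/-- the jump `⟦ζ⟧(x_i) = ζ(x_i⁻) - ζ(x_i⁺)` -/
def jmp (x : ℕ → ℝ) (N : ℕ) (P : Broken) (i : ℕ) : ℝ := lv x P i - rv x N P i

/-- the average `{ζ}(x_i) = (ζ(x_i⁻) + ζ(x_i⁺))/2` -/
def avg (x : ℕ → ℝ) (N : ℕ) (P : Broken) (i : ℕ) : ℝ := (lv x P i + rv x N P i) / 2

/-- the jump `⟦g(ζ)⟧(x_i)` of a composition `g ∘ ζ` -/
def jmpC (x : ℕ → ℝ) (N : ℕ) (g : ℝ → ℝ) (P : Broken) (i : ℕ) : ℝ :=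
  g (lv x P i) - g (rv x N P i)

/-- `η(w,v) = Σ_{i=1}^N ⟦w⟧⟦v⟧(x_i)` -/
def eta (x : ℕ → ℝ) (N : ℕ) (w v : Broken) : ℝ :=
  ∑ i ∈ Finset.Icc 1 N, jmp x N w i * jmp x N v i

/-- the mesh `a = x 0 < x 1 < ⋯ < x N = b` -/
structure Mesh (a b : ℝ) (N : ℕ) (x : ℕ → ℝ) : Prop where
  hab : a < b
  hN : 1 ≤ N
  left : x 0 = a
  right : x N = b
  mono : ∀ i, i < N → x i < x (i + 1)

/-- `Pf` is the elementwise L²-projection of the function `y ↦ f(ζ(y))` onto `W_h^k`: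
it has degree at most `k` and `∫_{I_i} (Pf - f(ζ)) w = 0` for every polynomial `w` of
degree at most `k` and every element `i`. -/
def IsProj (x : ℕ → ℝ) (N k : ℕ) (f : ℝ → ℝ) (P Pf : Broken) : Prop :=
  DegLE k Pf ∧ ∀ i ∈ Finset.Icc 1 N, ∀ w : Polynomial ℝ, w.natDegree ≤ k →
    (∫ y in (x (i-1))..(x i), ((Pf i).eval y - f ((P i).eval y)) * w.eval y) = 0

/-- a numerical trace takes equal values at the nodes `x_0` and `x_N` -/
def IsTrace (N : ℕ) (φ : ℕ → ℝ) : Prop := φ 0 = φ N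

/-- The semidiscrete DG scheme with zero source on `[0,T]`: `u q p : ℝ → Broken`
are the approximations (depending differentiably on `t`, with time derivatives
`ut qt pt`), and `uh qh ph` are the (possibly `t`-dependent) numerical traces. -/
structure Scheme (x : ℕ → ℝ) (N k : ℕ) (T ε : ℝ) (f : ℝ → ℝ)
    (u q p ut qt pt : ℝ → Broken) (uh qh ph : ℝ → ℕ → ℝ) : Prop where
  degu : ∀ t ∈ Icc (0:ℝ) T, DegLE k (u t)
  degq : ∀ t ∈ Icc (0:ℝ) T, DegLE k (q t)
  degp : ∀ t ∈ Icc (0:ℝ) T, DegLE k (p t)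
  degut : ∀ t ∈ Icc (0:ℝ) T, DegLE k (ut t)
  trace_u : ∀ t ∈ Icc (0:ℝ) T, IsTrace N (uh t)
  trace_q : ∀ t ∈ Icc (0:ℝ) T, IsTrace N (qh t)
  trace_p : ∀ t ∈ Icc (0:ℝ) T, IsTrace N (ph t)
  du : ∀ t ∈ Icc (0:ℝ) T, ∀ i, ∀ y : ℝ,
    HasDerivWithinAt (fun s => ((u s) i).eval y) (((ut t) i).eval y) (Icc (0:ℝ) T) t
  dq : ∀ t ∈ Icc (0:ℝ) T, ∀ i, ∀ y : ℝ,
    HasDerivWithinAt (fun s => ((q s) i).eval y) (((qt t) i).eval y) (Icc (0:ℝ) T) t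
  dp : ∀ t ∈ Icc (0:ℝ) T, ∀ i, ∀ y : ℝ,
    HasDerivWithinAt (fun s => ((p s) i).eval y) (((pt t) i).eval y) (Icc (0:ℝ) T) t
  eq1 : ∀ t ∈ Icc (0:ℝ) T, ∀ v : Broken, DegLE k v →
    ip x N (ev (q t)) (ev v) + ip x N (ev (u t)) (ev (dx v)) - bt x N (uh t) v = 0
  eq2 : ∀ t ∈ Icc (0:ℝ) T, ∀ z : Broken, DegLE k z →
    ip x N (ev (p t)) (ev z) + ε * ip x N (ev (q t)) (ev (dx z)) - ε * bt x N (qh t) z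
      = ip x N (fun i y => f (((u t) i).eval y)) (ev z)
  eq3 : ∀ t ∈ Icc (0:ℝ) T, ∀ w : Broken, DegLE k w →
    ip x N (ev (ut t)) (ev w) - ip x N (ev (p t)) (ev (dx w)) + bt x N (ph t) w = 0

end DG

set_option maxHeartbeats 1000000
set_option synthInstance.maxHeartbeats 400000

namespace DGAux

open DG intervalIntegral MeasureTheory


/-- integral of a polynomial of degree ≤ m as finite sum of monomial integrals -/
lemma integral_poly (P : ℝ[X]) (m : ℕ) (hP : P.natDegree ≤ m) (c d : ℝ) :
    ∫ y in c..d, P.eval y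
      = ∑ n ∈ Finset.range (m+1), P.coeff n * ((d^(n+1) - c^(n+1))/(n+1)) := by
  have h : ∀ y : ℝ, P.eval y = ∑ n ∈ Finset.range (m+1), P.coeff n * y ^ n := fun y =>
    eval_eq_sum_range' (lt_of_le_of_lt hP (Nat.lt_succ_self m)) y
  rw [intervalIntegral.integral_congr (g := fun y => ∑ n ∈ Finset.range (m+1), P.coeff n * y ^ n)
      (fun y _ => h y)]
  rw [intervalIntegral.integral_finset_sum (fun n _ =>
    ((continuous_const.fun_mul (continuous_pow n)).intervalIntegrable c d))]
  refine Finset.sum_congr rfl fun n _ => ?_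
  rw [intervalIntegral.integral_const_mul, integral_pow]

lemma hasDerivWithinAt_integral_poly {S : Set ℝ} {t : ℝ} {C : ℝ → ℝ[X]} {Ct : ℝ[X]} {m : ℕ}
    (hdeg : ∀ s ∈ S, (C s).natDegree ≤ m) (hdegt : Ct.natDegree ≤ m) (ht : t ∈ S)
    (hcoeff : ∀ n, HasDerivWithinAt (fun s => (C s).coeff n) (Ct.coeff n) S t) (c d : ℝ) :
    HasDerivWithinAt (fun s => ∫ y in c..d, (C s).eval y) (∫ y in c..d, Ct.eval y) S t := by
  have key : HasDerivWithinAt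
      (fun s => ∑ n ∈ Finset.range (m+1), (C s).coeff n * ((d^(n+1) - c^(n+1))/(n+1)))
      (∑ n ∈ Finset.range (m+1), Ct.coeff n * ((d^(n+1) - c^(n+1))/(n+1))) S t :=
    HasDerivWithinAt.fun_sum (fun n _ => (hcoeff n).mul_const _)
  rw [integral_poly Ct m hdegt c d]
  exact key.congr (fun s hs => integral_poly (C s) m (hdeg s hs) c d)
    (integral_poly (C t) m (hdeg t ht) c d)

lemma coeff_mul_hasDerivWithinAt {S : Set ℝ} {t : ℝ} {A B : ℝ → ℝ[X]} {At Bt : ℝ[X]}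
    (hA : ∀ n, HasDerivWithinAt (fun s => (A s).coeff n) (At.coeff n) S t)
    (hB : ∀ n, HasDerivWithinAt (fun s => (B s).coeff n) (Bt.coeff n) S t) (n : ℕ) :
    HasDerivWithinAt (fun s => (A s * B s).coeff n) ((At * B t + A t * Bt).coeff n) S t := by
  have key : HasDerivWithinAt
      (fun s => ∑ p ∈ Finset.HasAntidiagonal.antidiagonal n, (A s).coeff p.1 * (B s).coeff p.2)
      (∑ p ∈ Finset.HasAntidiagonal.antidiagonal n,
        (At.coeff p.1 * (B t).coeff p.2 + (A t).coeff p.1 * Bt.coeff p.2)) S t :=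
    HasDerivWithinAt.fun_sum (fun p _ => (hA p.1).mul (hB p.2))
  have h2 : (At * B t + A t * Bt).coeff n
      = ∑ p ∈ Finset.HasAntidiagonal.antidiagonal n,
        (At.coeff p.1 * (B t).coeff p.2 + (A t).coeff p.1 * Bt.coeff p.2) := by
    rw [Finset.sum_add_distrib, coeff_add, coeff_mul, coeff_mul]
  rw [h2]
  exact key.congr (fun s _ => coeff_mul _ _ _) (coeff_mul _ _ _)



variable {S : Set ℝ} {t : ℝ} {k : ℕ}

lemma nodes_inj (k : ℕ) : Set.InjOn (fun j : Fin (k+1) => (j : ℝ)) ↑(Finset.univ : Finset (Fin (k+1))) := by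
  intro a _ b _ h
  simp only at h
  have : (a : ℕ) = (b : ℕ) := by exact_mod_cast h
  exact Fin.ext this

lemma eval_coeff_deriv {P : ℝ → ℝ[X]} {Pt : ℝ[X]}
    (hS : UniqueDiffWithinAt ℝ S t) (ht : t ∈ S)
    (hdeg : ∀ s ∈ S, (P s).natDegree ≤ k)
    (hder : ∀ y, HasDerivWithinAt (fun s => (P s).eval y) (Pt.eval y) S t) :
    Pt.natDegree ≤ k ∧ ∀ n, HasDerivWithinAt (fun s => (P s).coeff n) (Pt.coeff n) S t := by
  classical
  set v : Fin (k+1) → ℝ := fun j => (j : ℝ) with hv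
  have hvi := nodes_inj k
  have card : (Finset.univ : Finset (Fin (k+1))).card = k + 1 := by simp
  have rep : ∀ Q : ℝ[X], Q.natDegree ≤ k →
      Q = Lagrange.interpolate Finset.univ v (fun j => Q.eval (v j)) := by
    intro Q hQ
    refine Lagrange.eq_interpolate hvi ?_
    rw [card]
    calc Q.degree ≤ (Q.natDegree : WithBot ℕ) := degree_le_natDegree
      _ < ((k+1 : ℕ) : WithBot ℕ) := by
        exact_mod_cast Nat.lt_succ_of_le hQ
  set Qt : ℝ[X] := Lagrange.interpolate Finset.univ v (fun j => Pt.eval (v j)) with hQt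
  have interp_coeff : ∀ (r : Fin (k+1) → ℝ) (n : ℕ),
      (Lagrange.interpolate Finset.univ v r).coeff n
        = ∑ j : Fin (k+1), r j * (Lagrange.basis Finset.univ v j).coeff n := by
    intro r n
    rw [Lagrange.interpolate_apply, finset_sum_coeff]
    exact Finset.sum_congr rfl fun j _ => by rw [coeff_C_mul]
  have interp_eval : ∀ (r : Fin (k+1) → ℝ) (y : ℝ),
      (Lagrange.interpolate Finset.univ v r).eval y
        = ∑ j : Fin (k+1), r j * (Lagrange.basis Finset.univ v j).eval y := by
    intro r y
    rw [Lagrange.interpolate_apply, eval_finset_sum]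
    exact Finset.sum_congr rfl fun j _ => by rw [eval_mul, eval_C]
  have dcoeff : ∀ n, HasDerivWithinAt (fun s => (P s).coeff n) (Qt.coeff n) S t := by
    intro n
    have key : HasDerivWithinAt
        (fun s => ∑ j : Fin (k+1), (P s).eval (v j) * (Lagrange.basis Finset.univ v j).coeff n)
        (∑ j : Fin (k+1), Pt.eval (v j) * (Lagrange.basis Finset.univ v j).coeff n) S t :=
      HasDerivWithinAt.fun_sum (fun j _ => (hder (v j)).mul_const _)
    rw [hQt, interp_coeff]
    refine key.congr (fun s hs => ?_) ?_
    · conv_lhs => rw [rep (P s) (hdeg s hs)]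
      rw [interp_coeff]
    · conv_lhs => rw [rep (P t) (hdeg t ht)]
      rw [interp_coeff]
  have hPQ : Pt = Qt := by
    apply Polynomial.funext
    intro y
    have d2 : HasDerivWithinAt (fun s => (P s).eval y) (Qt.eval y) S t := by
      have key : HasDerivWithinAt
          (fun s => ∑ j : Fin (k+1), (P s).eval (v j) * (Lagrange.basis Finset.univ v j).eval y)
          (∑ j : Fin (k+1), Pt.eval (v j) * (Lagrange.basis Finset.univ v j).eval y) S t :=
        HasDerivWithinAt.fun_sum (fun j _ => (hder (v j)).mul_const _)
      rw [hQt, interp_eval]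
      refine key.congr (fun s hs => ?_) ?_
      · conv_lhs => rw [rep (P s) (hdeg s hs)]
        rw [interp_eval]
      · conv_lhs => rw [rep (P t) (hdeg t ht)]
        rw [interp_eval]
    have e1 := (hder y).derivWithin hS
    have e2 := d2.derivWithin hS
    rw [← e1, ← e2]
  constructor
  · rw [hPQ, hQt]
    have hlt := Lagrange.degree_interpolate_lt (r := fun j => Pt.eval (v j)) hvi
    rw [card] at hlt
    rw [← hQt] at hlt
    by_cases h0 : Qt = 0
    · show Qt.natDegree ≤ k
      rw [h0]; simp
    · show Qt.natDegree ≤ k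
      have := (natDegree_lt_iff_degree_lt h0).2 (by exact_mod_cast hlt)
      omega
  · intro n; rw [hPQ]; exact dcoeff n



lemma ftc_mul (P Q : ℝ[X]) (c d : ℝ) :
    ∫ y in c..d, (P.eval y * Q.derivative.eval y + Q.eval y * P.derivative.eval y)
      = P.eval d * Q.eval d - P.eval c * Q.eval c := by
  refine intervalIntegral.integral_eq_sub_of_hasDerivAt (f := fun y => P.eval y * Q.eval y) (fun y _ => ?_) ?_
  · have h := (P.hasDerivAt y).fun_mul (Q.hasDerivAt y)
    exact h.congr_deriv (by ring)
  · exact ((P.continuous.mul Q.derivative.continuous).add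
      (Q.continuous.mul P.derivative.continuous)).intervalIntegrable c d

/-- shift a sum over `Icc 1 N` of `F (i-1)` -/
lemma sum_shift {N : ℕ} (hN : 1 ≤ N) (F : ℕ → ℝ) :
    ∑ i ∈ Finset.Icc 1 N, F (i - 1) = F 0 + ∑ j ∈ Finset.Icc 1 (N-1), F j := by
  have h1 : ∑ i ∈ Finset.Icc 1 N, F (i - 1) = ∑ j ∈ Finset.Icc 0 (N-1), F j := by
    refine Finset.sum_nbij' (fun i => i - 1) (fun j => j + 1) ?_ ?_ ?_ ?_ ?_ <;>
      intros a ha <;> simp only [Finset.mem_Icc] at * <;> try omega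
  rw [h1]
  have h2 : Finset.Icc 0 (N-1) = insert 0 (Finset.Icc 1 (N-1)) := by
    ext j; simp only [Finset.mem_Icc, Finset.mem_insert]; omega
  rw [h2, Finset.sum_insert (by simp)]

lemma sum_top {N : ℕ} (hN : 1 ≤ N) (G : ℕ → ℝ) :
    ∑ j ∈ Finset.Icc 1 N, G j = (∑ j ∈ Finset.Icc 1 (N-1), G j) + G N := by
  obtain ⟨M, rfl⟩ : ∃ M, N = M + 1 := ⟨N - 1, by omega⟩
  rw [Finset.sum_Icc_succ_top (by omega)]
  simp

/-- key reindexing: sums of products of values at left endpoints of elements equal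
sums over `rv`, given matching at the wrap-around -/
lemma sum_left_eq_sum_rv {N : ℕ} (hN : 1 ≤ N) (F G : ℕ → ℝ)
    (h0 : F 0 = G N) (hmid : ∀ j, 1 ≤ j → j ≤ N - 1 → F j = G j) :
    ∑ i ∈ Finset.Icc 1 N, F (i - 1) = ∑ j ∈ Finset.Icc 1 N, G j := by
  rw [sum_shift hN F, sum_top hN G, h0]
  rw [Finset.sum_congr rfl (fun j hj => by
    simp only [Finset.mem_Icc] at hj; exact hmid j hj.1 hj.2)]
  ring

lemma bt_eq (x : ℕ → ℝ) (N : ℕ) (hN : 1 ≤ N) (φ : ℕ → ℝ) (hφ : φ 0 = φ N) (v : DG.Broken) :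
    bt x N φ v = ∑ i ∈ Finset.Icc 1 N, φ i * jmp x N v i := by
  unfold bt
  have h2 : ∑ i ∈ Finset.Icc 1 N, φ (i-1) * (v i).eval (x (i-1))
      = ∑ i ∈ Finset.Icc 1 N, φ i * rv x N v i := by
    have e1 : ∑ i ∈ Finset.Icc 1 N, φ (i-1) * (v i).eval (x (i-1))
        = ∑ i ∈ Finset.Icc 1 N, (fun j => φ j * (v (j+1)).eval (x j)) (i - 1) := by
      refine Finset.sum_congr rfl fun i hi => ?_
      simp only [Finset.mem_Icc] at hi
      have : i - 1 + 1 = i := by omega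
      simp only [this]
    rw [e1]
    refine sum_left_eq_sum_rv hN (fun j => φ j * (v (j+1)).eval (x j))
      (fun i => φ i * rv x N v i) ?_ ?_
    · simp [rv, hφ]
    · intro j h1 h2
      have : j ≠ N := by omega
      simp only [rv, if_neg this]
  rw [Finset.sum_sub_distrib, h2, ← Finset.sum_sub_distrib]
  refine Finset.sum_congr rfl fun i _ => ?_
  simp only [jmp, lv]
  ring

lemma sum_right_prod (x : ℕ → ℝ) {N : ℕ} (hN : 1 ≤ N) (P Q : DG.Broken) :
    ∑ i ∈ Finset.Icc 1 N, (P i).eval (x (i-1)) * (Q i).eval (x (i-1))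
      = ∑ i ∈ Finset.Icc 1 N, rv x N P i * rv x N Q i := by
  have e1 : ∑ i ∈ Finset.Icc 1 N, (P i).eval (x (i-1)) * (Q i).eval (x (i-1))
      = ∑ i ∈ Finset.Icc 1 N, (fun j => (P (j+1)).eval (x j) * (Q (j+1)).eval (x j)) (i - 1) := by
    refine Finset.sum_congr rfl fun i hi => ?_
    simp only [Finset.mem_Icc] at hi
    have : i - 1 + 1 = i := by omega
    simp only [this]
  rw [e1]
  refine sum_left_eq_sum_rv hN (fun j => (P (j+1)).eval (x j) * (Q (j+1)).eval (x j))
    (fun i => rv x N P i * rv x N Q i) ?_ ?_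
  · simp [rv]
  · intro j h1 h2
    have : j ≠ N := by omega
    simp only [rv, if_neg this]

lemma ip_cross (x : ℕ → ℝ) {N : ℕ} (hN : 1 ≤ N) (P Q : DG.Broken) :
    ip x N (ev P) (ev (dx Q)) + ip x N (ev Q) (ev (dx P))
      = ∑ i ∈ Finset.Icc 1 N, (avg x N P i * jmp x N Q i + avg x N Q i * jmp x N P i) := by
  unfold ip ev dx
  rw [← Finset.sum_add_distrib]
  have h1 : ∀ i ∈ Finset.Icc 1 N,
      ((∫ y in (x (i-1))..(x i), (P i).eval y * (Q i).derivative.eval y)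
        + ∫ y in (x (i-1))..(x i), (Q i).eval y * (P i).derivative.eval y)
      = lv x P i * lv x Q i - (P i).eval (x (i-1)) * (Q i).eval (x (i-1)) := by
    intro i _
    rw [← intervalIntegral.integral_add
      (((P i).continuous.fun_mul (Q i).derivative.continuous).intervalIntegrable _ _)
      (((Q i).continuous.fun_mul (P i).derivative.continuous).intervalIntegrable _ _)]
    exact ftc_mul (P i) (Q i) (x (i-1)) (x i)
  rw [Finset.sum_congr rfl h1, Finset.sum_sub_distrib, sum_right_prod x hN P Q,
    ← Finset.sum_sub_distrib]
  refine Finset.sum_congr rfl fun i _ => ?_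
  simp only [avg, jmp]
  ring

lemma ip_self (x : ℕ → ℝ) {N : ℕ} (hN : 1 ≤ N) (P : DG.Broken) :
    ip x N (ev P) (ev (dx P)) = ∑ i ∈ Finset.Icc 1 N, avg x N P i * jmp x N P i := by
  have h := ip_cross x hN P P
  have h2 : ∑ i ∈ Finset.Icc 1 N, (avg x N P i * jmp x N P i + avg x N P i * jmp x N P i)
      = 2 * ∑ i ∈ Finset.Icc 1 N, avg x N P i * jmp x N P i := by
    rw [Finset.mul_sum]
    exact Finset.sum_congr rfl fun i _ => by ring
  rw [h2] at h
  linarith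



lemma clm_intervalIntegral_apply {k : ℕ} {c d : ℝ}
    (φ : ℝ → ((Fin (k+1) → ℝ) →L[ℝ] ℝ)) (hφ : IntervalIntegrable φ MeasureTheory.volume c d)
    (v : Fin (k+1) → ℝ) :
    (∫ y in c..d, φ y) v = ∫ y in c..d, φ y v := by
  rw [intervalIntegral_eq_integral_uIoc, intervalIntegral_eq_integral_uIoc]
  rw [ContinuousLinearMap.smul_apply]
  congr 1
  exact ContinuousLinearMap.integral_apply hφ.def' v

lemma vterm {S : Set ℝ} {t : ℝ} {k : ℕ} {f V : ℝ → ℝ} (hf : Continuous f)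
    (hV : ∀ y, HasDerivAt V (f y) y)
    {A : ℝ → ℝ[X]} {At : ℝ[X]} (ht : t ∈ S)
    (hdeg : ∀ s ∈ S, (A s).natDegree ≤ k) (hdegt : At.natDegree ≤ k)
    (hcoeff : ∀ n, HasDerivWithinAt (fun s => (A s).coeff n) (At.coeff n) S t)
    (c d : ℝ) :
    HasDerivWithinAt (fun s => ∫ y in c..d, V ((A s).eval y))
      (∫ y in c..d, f ((A t).eval y) * At.eval y) S t := by
  have hVcont : Continuous V := by
    rw [continuous_iff_continuousAt]; exact fun z => (hV z).continuousAt
  set Λ : ℝ → ((Fin (k+1) → ℝ) →L[ℝ] ℝ) :=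
    fun y => ∑ n : Fin (k+1), (y^(n:ℕ)) • ContinuousLinearMap.proj n with hΛ
  have hΛapp : ∀ (y : ℝ) (a : Fin (k+1) → ℝ), Λ y a = ∑ n : Fin (k+1), y^(n:ℕ) * a n := by
    intro y a
    rw [hΛ]
    simp [ContinuousLinearMap.sum_apply, ContinuousLinearMap.smul_apply, smul_eq_mul]
  have keval : ∀ Q : ℝ[X], Q.natDegree ≤ k → ∀ y : ℝ,
      Q.eval y = Λ y (fun n : Fin (k+1) => Q.coeff n) := by
    intro Q hQ y
    rw [hΛapp, eval_eq_sum_range' (lt_of_le_of_lt hQ (Nat.lt_succ_self k)) y,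
      ← Fin.sum_univ_eq_sum_range (fun n => Q.coeff n * y ^ n) (k+1)]
    exact Finset.sum_congr rfl fun n _ => by ring
  have hΛcont : Continuous Λ := by
    apply continuous_finset_sum
    exact fun n _ => (continuous_pow (n:ℕ)).smul continuous_const
  have hΛycont : ∀ a : Fin (k+1) → ℝ, Continuous fun y => Λ y a := by
    intro a
    exact (ContinuousLinearMap.apply ℝ ℝ a).continuous.comp hΛcont
  set M : ℝ := |c| ⊔ |d| with hM
  have hM0 : 0 ≤ M := le_trans (abs_nonneg c) (le_max_left _ _)
  set CB : ℝ := ∑ n ∈ Finset.range (k+1), (M+1)^n with hCB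
  have hCB0 : 0 ≤ CB := Finset.sum_nonneg fun n _ => pow_nonneg (by linarith) n
  have hΛnorm : ∀ y ∈ Set.uIoc c d, ‖Λ y‖ ≤ CB := by
    intro y hy
    have hyM : |y| ≤ M := by
      rcases le_total c d with h | h
      · rw [Set.uIoc_of_le h] at hy
        have h1 := hy.1; have h2 := hy.2
        have := neg_abs_le c; have := le_abs_self d
        have := le_max_left |c| |d|; have := le_max_right |c| |d|
        rw [abs_le]; constructor <;> [linarith; linarith]
      · rw [Set.uIoc_of_ge h] at hy
        have h1 := hy.1; have h2 := hy.2
        have := neg_abs_le d; have := le_abs_self c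
        have := le_max_left |c| |d|; have := le_max_right |c| |d|
        rw [abs_le]; constructor <;> [linarith; linarith]
    calc ‖Λ y‖ ≤ ∑ n : Fin (k+1), ‖(y^(n:ℕ)) • (ContinuousLinearMap.proj (R := ℝ)
          (φ := fun _ : Fin (k+1) => ℝ) n)‖ := norm_sum_le _ _
      _ ≤ ∑ n : Fin (k+1), (M+1)^(n:ℕ) := by
          refine Finset.sum_le_sum fun n _ => ?_
          have hproj : ‖(ContinuousLinearMap.proj (R := ℝ) (φ := fun _ : Fin (k+1) => ℝ) n)‖ ≤ 1 :=
            ContinuousLinearMap.opNorm_le_bound _ zero_le_one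
              (fun a => by simpa using norm_le_pi_norm a n)
          calc ‖y^(n:ℕ) • (ContinuousLinearMap.proj (R := ℝ) (φ := fun _ : Fin (k+1) => ℝ) n)‖
              ≤ ‖y^(n:ℕ)‖ * ‖(ContinuousLinearMap.proj (R := ℝ) (φ := fun _ : Fin (k+1) => ℝ) n)‖ :=
                ContinuousLinearMap.opNorm_smul_le _ _
            _ ≤ ‖y^(n:ℕ)‖ * 1 := mul_le_mul_of_nonneg_left hproj (norm_nonneg _)
            _ = |y|^(n:ℕ) := by rw [mul_one, Real.norm_eq_abs, abs_pow]
            _ ≤ (M+1)^(n:ℕ) := pow_le_pow_left₀ (abs_nonneg y) (by linarith) _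
      _ ≤ CB := by
          rw [hCB, ← Fin.sum_univ_eq_sum_range (fun n => (M+1)^n) (k+1)]
  set x₀ : Fin (k+1) → ℝ := fun n => (A t).coeff n with hx₀
  set R₀ : ℝ := CB * (‖x₀‖ + 1) with hR₀
  have hR₀0 : 0 ≤ R₀ := mul_nonneg hCB0 (by positivity)
  obtain ⟨Mf, hMf⟩ := (isCompact_Icc (a := -R₀) (b := R₀)).exists_bound_of_continuousOn
    hf.continuousOn
  have hMf0 : 0 ≤ Mf := le_trans (norm_nonneg (f 0)) (hMf 0 ⟨by linarith, by linarith⟩)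
  have hmem : ∀ y ∈ Set.uIoc c d, ∀ a ∈ Metric.ball x₀ 1, |Λ y a| ≤ R₀ := by
    intro y hy a ha
    have hanorm : ‖a‖ ≤ ‖x₀‖ + 1 := by
      have := mem_ball_iff_norm.1 ha
      calc ‖a‖ = ‖x₀ + (a - x₀)‖ := by ring_nf
        _ ≤ ‖x₀‖ + ‖a - x₀‖ := norm_add_le _ _
        _ ≤ ‖x₀‖ + 1 := by linarith
    calc |Λ y a| ≤ ‖Λ y‖ * ‖a‖ := (Λ y).le_opNorm a
      _ ≤ CB * (‖x₀‖ + 1) := mul_le_mul (hΛnorm y hy) hanorm (norm_nonneg a) hCB0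
  have hfb : ∀ y ∈ Set.uIoc c d, ∀ a ∈ Metric.ball x₀ 1, |f (Λ y a)| ≤ Mf := by
    intro y hy a ha
    have := hmem y hy a ha
    have habs := abs_le.1 this
    simpa using hMf (Λ y a) ⟨by linarith [habs.1], by linarith [habs.2]⟩
  have hFD : HasFDerivAt (fun a : Fin (k+1) → ℝ => ∫ y in c..d, V (Λ y a))
      (∫ y in c..d, f (Λ y x₀) • Λ y) x₀ := by
    apply intervalIntegral.hasFDerivAt_integral_of_dominated_of_fderiv_le
      (F' := fun a y => f (Λ y a) • Λ y) (bound := fun _ => Mf * CB) (Metric.ball_mem_nhds x₀ one_pos)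
    · exact Filter.Eventually.of_forall fun a =>
        ((hVcont.comp (hΛycont a)).aestronglyMeasurable)
    · exact (hVcont.comp (hΛycont x₀)).intervalIntegrable c d
    · exact (((hf.comp (hΛycont x₀)).smul hΛcont).aestronglyMeasurable)
    · refine Filter.Eventually.of_forall fun y => fun hy a ha => ?_
      calc ‖f (Λ y a) • Λ y‖ ≤ ‖f (Λ y a)‖ * ‖Λ y‖ := ContinuousLinearMap.opNorm_smul_le _ _
        _ ≤ Mf * CB := by
            rw [Real.norm_eq_abs]
            exact mul_le_mul (hfb y hy a ha) (hΛnorm y hy) (norm_nonneg _) hMf0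
    · exact intervalIntegrable_const
    · refine Filter.Eventually.of_forall fun y => fun hy a ha => ?_
      exact (hV (Λ y a)).comp_hasFDerivAt a (Λ y).hasFDerivAt
  set γ' : Fin (k+1) → ℝ := fun n => At.coeff n with hγ'
  have hγ : HasDerivWithinAt (fun s => (fun n : Fin (k+1) => (A s).coeff n)) γ' S t :=
    hasDerivWithinAt_pi.2 fun n => hcoeff n
  have comp := hFD.comp_hasDerivWithinAt t hγ
  have hint : IntervalIntegrable (fun y => f (Λ y x₀) • Λ y) MeasureTheory.volume c d :=
    ((hf.comp (hΛycont x₀)).smul hΛcont).intervalIntegrable c d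
  have happ : (∫ y in c..d, f (Λ y x₀) • Λ y) γ' = ∫ y in c..d, f ((A t).eval y) * At.eval y := by
    rw [clm_intervalIntegral_apply _ hint γ']
    refine intervalIntegral.integral_congr fun y _ => ?_
    rw [ContinuousLinearMap.smul_apply, smul_eq_mul]
    rw [keval (A t) (hdeg t ht) y, keval At hdegt y]
  rw [happ] at comp
  refine comp.congr (fun s hs => ?_) ?_
  · exact intervalIntegral.integral_congr fun y _ => by rw [keval (A s) (hdeg s hs) y]
  · exact intervalIntegral.integral_congr fun y _ => by rw [keval (A t) (hdeg t ht) y]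


lemma ip_mul_deriv {S : Set ℝ} {t : ℝ} {A B : ℝ → ℝ[X]} {At Bt : ℝ[X]} {kA kB : ℕ}
    (ht : t ∈ S)
    (hadeg : ∀ s ∈ S, (A s).natDegree ≤ kA) (hbdeg : ∀ s ∈ S, (B s).natDegree ≤ kB)
    (hAt : At.natDegree ≤ kA) (hBt : Bt.natDegree ≤ kB)
    (hA : ∀ n, HasDerivWithinAt (fun s => (A s).coeff n) (At.coeff n) S t)
    (hB : ∀ n, HasDerivWithinAt (fun s => (B s).coeff n) (Bt.coeff n) S t) (c d : ℝ) :
    HasDerivWithinAt (fun s => ∫ y in c..d, (A s).eval y * (B s).eval y)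
      (∫ y in c..d, (At.eval y * (B t).eval y + (A t).eval y * Bt.eval y)) S t := by
  have hdeg : ∀ s ∈ S, (A s * B s).natDegree ≤ kA + kB := fun s hs =>
    le_trans (natDegree_mul_le) (add_le_add (hadeg s hs) (hbdeg s hs))
  have hdegt : (At * B t + A t * Bt).natDegree ≤ kA + kB := by
    refine le_trans (natDegree_add_le _ _) (max_le ?_ ?_)
    · exact le_trans natDegree_mul_le (add_le_add hAt (hbdeg t ht))
    · exact le_trans natDegree_mul_le (add_le_add (hadeg t ht) hBt)
  have h := hasDerivWithinAt_integral_poly hdeg hdegt ht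
    (coeff_mul_hasDerivWithinAt hA hB) c d
  have e2 : (∫ y in c..d, (At * B t + A t * Bt).eval y)
      = ∫ y in c..d, (At.eval y * (B t).eval y + (A t).eval y * Bt.eval y) := by
    refine intervalIntegral.integral_congr fun y _ => ?_
    simp [eval_add, eval_mul]
  rw [← e2]
  exact h.congr (fun s _ => by
      refine intervalIntegral.integral_congr fun y _ => ?_
      simp [eval_mul])
    (by refine intervalIntegral.integral_congr fun y _ => ?_
        simp [eval_mul])

lemma ip_mul_deriv_const {S : Set ℝ} {t : ℝ} {A : ℝ → ℝ[X]} {At : ℝ[X]} {kA kB : ℕ}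
    (ht : t ∈ S) (B : ℝ[X])
    (hadeg : ∀ s ∈ S, (A s).natDegree ≤ kA) (hbdeg : B.natDegree ≤ kB)
    (hAt : At.natDegree ≤ kA)
    (hA : ∀ n, HasDerivWithinAt (fun s => (A s).coeff n) (At.coeff n) S t) (c d : ℝ) :
    HasDerivWithinAt (fun s => ∫ y in c..d, (A s).eval y * B.eval y)
      (∫ y in c..d, At.eval y * B.eval y) S t := by
  have hB : ∀ n, HasDerivWithinAt (fun _ : ℝ => B.coeff n) ((0 : ℝ[X]).coeff n) S t := by
    intro n; rw [coeff_zero]; exact hasDerivWithinAt_const t S (B.coeff n)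
  have h := ip_mul_deriv (B := fun _ => B) (Bt := 0) ht hadeg (fun _ _ => hbdeg) hAt
    (by simp) hA hB c d
  have e : (∫ y in c..d, (At.eval y * B.eval y + (A t).eval y * (0:ℝ[X]).eval y))
      = ∫ y in c..d, At.eval y * B.eval y := by
    refine intervalIntegral.integral_congr fun y _ => ?_
    simp
  rwa [e] at h

end DGAux

open DGAux in
/-- Theorem 2.1, Hamiltonian part: with the traces (2.4) and the constraint (2.5b) on
the stabilization parameters, the discrete Hamiltonian is conserved.  (The required
differentiability in `t` of `u_h` and `q_h` is part of the scheme, via `ut` and `qt`.) -/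
theorem dg_hamiltonian_part
    (a b : ℝ) (N k : ℕ) (x : ℕ → ℝ) (hmesh : DG.Mesh a b N x)
    (T ε : ℝ) (hT : 0 < T) (f V : ℝ → ℝ) (hf : Continuous f)
    (hV : ∀ y : ℝ, HasDerivAt V (f y) y)
    (u q p ut qt pt : ℝ → DG.Broken) (uh qh ph : ℝ → ℕ → ℝ)
    (hS : DG.Scheme x N k T ε f u q p ut qt pt uh qh ph)
    (τqu τpu : ℝ → ℝ)
    (huh : ∀ t ∈ Set.Icc (0:ℝ) T, ∀ i ∈ Finset.Icc 1 N,
      uh t i = DG.avg x N (u t) i)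
    (hqh : ∀ t ∈ Set.Icc (0:ℝ) T, ∀ i ∈ Finset.Icc 1 N,
      qh t i = DG.avg x N (q t) i + τqu t * DG.jmp x N (u t) i)
    (hph : ∀ t ∈ Set.Icc (0:ℝ) T, ∀ i ∈ Finset.Icc 1 N,
      ph t i = DG.avg x N (p t) i + τpu t * DG.jmp x N (u t) i)
    (hconsB : ∀ t ∈ Set.Icc (0:ℝ) T,
      τpu t * (∑ i ∈ Finset.Icc 1 N, DG.jmp x N (p t) i * DG.jmp x N (u t) i)
        + ε * τqu t * (∑ i ∈ Finset.Icc 1 N, DG.jmp x N (ut t) i * DG.jmp x N (u t) i)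
        = 0) :
    ∀ t₁ ∈ Set.Icc (0:ℝ) T, ∀ t₂ ∈ Set.Icc (0:ℝ) T,
      (∑ i ∈ Finset.Icc 1 N, ∫ y in (x (i-1))..(x i),
          ((ε/2) * ((q t₁) i).eval y ^ 2 - V (((u t₁) i).eval y)))
        = ∑ i ∈ Finset.Icc 1 N, ∫ y in (x (i-1))..(x i),
            ((ε/2) * ((q t₂) i).eval y ^ 2 - V (((u t₂) i).eval y)) := by
  classical
  have hN : 1 ≤ N := hmesh.hN
  have hUD : UniqueDiffOn ℝ (Set.Icc (0:ℝ) T) := uniqueDiffOn_Icc hT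
  have hVcont : Continuous V := by
    rw [continuous_iff_continuousAt]; exact fun z => (hV z).continuousAt
  -- coefficient derivatives from the scheme
  have hu : ∀ t ∈ Set.Icc (0:ℝ) T, ∀ i, (ut t i).natDegree ≤ k ∧
      ∀ n, HasDerivWithinAt (fun s => (u s i).coeff n) ((ut t i).coeff n) (Set.Icc (0:ℝ) T) t :=
    fun t ht i => DGAux.eval_coeff_deriv (hUD t ht) ht (fun s hs => hS.degu s hs i)
      (fun y => hS.du t ht i y)
  have hq : ∀ t ∈ Set.Icc (0:ℝ) T, ∀ i, (qt t i).natDegree ≤ k ∧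
      ∀ n, HasDerivWithinAt (fun s => (q s i).coeff n) ((qt t i).coeff n) (Set.Icc (0:ℝ) T) t :=
    fun t ht i => DGAux.eval_coeff_deriv (hUD t ht) ht (fun s hs => hS.degq s hs i)
      (fun y => hS.dq t ht i y)
  -- trace rewrites
  have btu : ∀ s ∈ Set.Icc (0:ℝ) T, ∀ v : DG.Broken, DG.bt x N (uh s) v
      = ∑ i ∈ Finset.Icc 1 N, DG.avg x N (u s) i * DG.jmp x N v i := by
    intro s hs v
    rw [DGAux.bt_eq x N hN (uh s) (hS.trace_u s hs) v]
    exact Finset.sum_congr rfl fun i hi => by rw [huh s hs i hi]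
  have btq : ∀ s ∈ Set.Icc (0:ℝ) T, ∀ v : DG.Broken, DG.bt x N (qh s) v
      = ∑ i ∈ Finset.Icc 1 N,
        (DG.avg x N (q s) i + τqu s * DG.jmp x N (u s) i) * DG.jmp x N v i := by
    intro s hs v
    rw [DGAux.bt_eq x N hN (qh s) (hS.trace_q s hs) v]
    exact Finset.sum_congr rfl fun i hi => by rw [hqh s hs i hi]
  have btp : ∀ s ∈ Set.Icc (0:ℝ) T, ∀ v : DG.Broken, DG.bt x N (ph s) v
      = ∑ i ∈ Finset.Icc 1 N,
        (DG.avg x N (p s) i + τpu s * DG.jmp x N (u s) i) * DG.jmp x N v i := by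
    intro s hs v
    rw [DGAux.bt_eq x N hN (ph s) (hS.trace_p s hs) v]
    exact Finset.sum_congr rfl fun i hi => by rw [hph s hs i hi]
  -- KEY energy identity at each time
  have KEY : ∀ t ∈ Set.Icc (0:ℝ) T,
      ε * DG.ip x N (DG.ev (q t)) (DG.ev (qt t))
        - DG.ip x N (fun i y => f (((u t) i).eval y)) (DG.ev (ut t)) = 0 := by
    intro t ht
    -- derivative of the first equation of the scheme, tested against v = q t
    have hipd1 : HasDerivWithinAt (fun s => DG.ip x N (DG.ev (q s)) (DG.ev (q t)))
        (DG.ip x N (DG.ev (qt t)) (DG.ev (q t))) (Set.Icc (0:ℝ) T) t := by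
      unfold DG.ip DG.ev
      exact HasDerivWithinAt.fun_sum fun i _ => DGAux.ip_mul_deriv_const (kA := k) (kB := k) ht
        (q t i) (fun s hs => hS.degq s hs i) (hS.degq t ht i) (hq t ht i).1 (hq t ht i).2 _ _
    have hipd2 : HasDerivWithinAt (fun s => DG.ip x N (DG.ev (u s)) (DG.ev (DG.dx (q t))))
        (DG.ip x N (DG.ev (ut t)) (DG.ev (DG.dx (q t)))) (Set.Icc (0:ℝ) T) t := by
      unfold DG.ip DG.ev DG.dx
      exact HasDerivWithinAt.fun_sum fun i _ => DGAux.ip_mul_deriv_const (kA := k) (kB := k) ht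
        (q t i).derivative (fun s hs => hS.degu s hs i)
        (le_trans (natDegree_derivative_le _) (by have := hS.degq t ht i; omega))
        (hS.degut t ht i) (hu t ht i).2 _ _
    have havgd : ∀ i, HasDerivWithinAt (fun s => DG.avg x N (u s) i)
        (DG.avg x N (ut t) i) (Set.Icc (0:ℝ) T) t := by
      intro i
      unfold DG.avg DG.lv DG.rv
      by_cases hiN : i = N
      · simp only [hiN, if_pos]
        exact ((hS.du t ht N (x N)).add (hS.du t ht 1 (x 0))).div_const 2
      · simp only [if_neg hiN]
        exact ((hS.du t ht i (x i)).add (hS.du t ht (i+1) (x i))).div_const 2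
    have hsumd : HasDerivWithinAt
        (fun s => ∑ i ∈ Finset.Icc 1 N, DG.avg x N (u s) i * DG.jmp x N (q t) i)
        (∑ i ∈ Finset.Icc 1 N, DG.avg x N (ut t) i * DG.jmp x N (q t) i)
        (Set.Icc (0:ℝ) T) t :=
      HasDerivWithinAt.fun_sum fun i _ => (havgd i).mul_const _
    have hgd : HasDerivWithinAt (fun s => DG.ip x N (DG.ev (q s)) (DG.ev (q t))
        + DG.ip x N (DG.ev (u s)) (DG.ev (DG.dx (q t)))
        - ∑ i ∈ Finset.Icc 1 N, DG.avg x N (u s) i * DG.jmp x N (q t) i)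
        (DG.ip x N (DG.ev (qt t)) (DG.ev (q t))
          + DG.ip x N (DG.ev (ut t)) (DG.ev (DG.dx (q t)))
          - ∑ i ∈ Finset.Icc 1 N, DG.avg x N (ut t) i * DG.jmp x N (q t) i)
        (Set.Icc (0:ℝ) T) t :=
      (hipd1.add hipd2).sub hsumd
    have hg0 : ∀ s ∈ Set.Icc (0:ℝ) T, DG.ip x N (DG.ev (q s)) (DG.ev (q t))
        + DG.ip x N (DG.ev (u s)) (DG.ev (DG.dx (q t)))
        - ∑ i ∈ Finset.Icc 1 N, DG.avg x N (u s) i * DG.jmp x N (q t) i = 0 := by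
      intro s hs
      rw [← btu s hs (q t)]
      exact hS.eq1 s hs (q t) (hS.degq t ht)
    have hzero : HasDerivWithinAt (fun s => DG.ip x N (DG.ev (q s)) (DG.ev (q t))
        + DG.ip x N (DG.ev (u s)) (DG.ev (DG.dx (q t)))
        - ∑ i ∈ Finset.Icc 1 N, DG.avg x N (u s) i * DG.jmp x N (q t) i) 0
        (Set.Icc (0:ℝ) T) t :=
      (hasDerivWithinAt_const t _ 0).congr (fun s hs => hg0 s hs) (hg0 t ht)
    have hD1 : DG.ip x N (DG.ev (qt t)) (DG.ev (q t))
        + DG.ip x N (DG.ev (ut t)) (DG.ev (DG.dx (q t)))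
        - ∑ i ∈ Finset.Icc 1 N, DG.avg x N (ut t) i * DG.jmp x N (q t) i = 0 := by
      rw [← hgd.derivWithin (hUD t ht)]
      exact hzero.derivWithin (hUD t ht)
    -- second equation tested with z = ut t
    have heq2 := hS.eq2 t ht (ut t) (hS.degut t ht)
    rw [btq t ht (ut t)] at heq2
    have e2 : ∑ i ∈ Finset.Icc 1 N,
        (DG.avg x N (q t) i + τqu t * DG.jmp x N (u t) i) * DG.jmp x N (ut t) i
        = (∑ i ∈ Finset.Icc 1 N, DG.avg x N (q t) i * DG.jmp x N (ut t) i)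
          + τqu t * ∑ i ∈ Finset.Icc 1 N, DG.jmp x N (u t) i * DG.jmp x N (ut t) i := by
      rw [Finset.mul_sum, ← Finset.sum_add_distrib]
      exact Finset.sum_congr rfl fun i _ => by ring
    rw [e2] at heq2
    -- third equation tested with w = p t
    have heq3 := hS.eq3 t ht (p t) (hS.degp t ht)
    rw [btp t ht (p t)] at heq3
    have e3 : ∑ i ∈ Finset.Icc 1 N,
        (DG.avg x N (p t) i + τpu t * DG.jmp x N (u t) i) * DG.jmp x N (p t) i
        = (∑ i ∈ Finset.Icc 1 N, DG.avg x N (p t) i * DG.jmp x N (p t) i)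
          + τpu t * ∑ i ∈ Finset.Icc 1 N, DG.jmp x N (u t) i * DG.jmp x N (p t) i := by
      rw [Finset.mul_sum, ← Finset.sum_add_distrib]
      exact Finset.sum_congr rfl fun i _ => by ring
    rw [e3] at heq3
    -- algebraic identities at the nodes
    have hself := DGAux.ip_self x hN (p t)
    have hcross := DGAux.ip_cross x hN (ut t) (q t)
    rw [Finset.sum_add_distrib] at hcross
    -- conservation constraint, reordered
    have hcons := hconsB t ht
    have e5 : ∑ i ∈ Finset.Icc 1 N, DG.jmp x N (p t) i * DG.jmp x N (u t) i
        = ∑ i ∈ Finset.Icc 1 N, DG.jmp x N (u t) i * DG.jmp x N (p t) i :=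
      Finset.sum_congr rfl fun i _ => mul_comm _ _
    have e6 : ∑ i ∈ Finset.Icc 1 N, DG.jmp x N (ut t) i * DG.jmp x N (u t) i
        = ∑ i ∈ Finset.Icc 1 N, DG.jmp x N (u t) i * DG.jmp x N (ut t) i :=
      Finset.sum_congr rfl fun i _ => mul_comm _ _
    rw [e5, e6] at hcons
    -- symmetry of ip
    have hsym1 : DG.ip x N (DG.ev (q t)) (DG.ev (qt t))
        = DG.ip x N (DG.ev (qt t)) (DG.ev (q t)) := by
      unfold DG.ip DG.ev
      exact Finset.sum_congr rfl fun i _ =>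
        intervalIntegral.integral_congr fun y _ => mul_comm _ _
    have hsym2 : DG.ip x N (DG.ev (ut t)) (DG.ev (p t))
        = DG.ip x N (DG.ev (p t)) (DG.ev (ut t)) := by
      unfold DG.ip DG.ev
      exact Finset.sum_congr rfl fun i _ =>
        intervalIntegral.integral_congr fun y _ => mul_comm _ _
    linear_combination ε * hD1 + ε * hsym1 - ε * hcross + heq2 + hsym2 - heq3 - hself + hcons
  -- derivative of the discrete Hamiltonian
  have hE0 : ∀ t ∈ Set.Icc (0:ℝ) T, HasDerivWithinAt
      (fun s => ∑ i ∈ Finset.Icc 1 N, ∫ y in (x (i-1))..(x i),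
        ((ε/2) * ((q s) i).eval y ^ 2 - V (((u s) i).eval y))) 0 (Set.Icc (0:ℝ) T) t := by
    intro t ht
    have hDi : ∀ i ∈ Finset.Icc 1 N, HasDerivWithinAt
        (fun s => ∫ y in (x (i-1))..(x i), ((ε/2) * ((q s) i).eval y ^ 2 - V (((u s) i).eval y)))
        (ε * (∫ y in (x (i-1))..(x i), ((q t) i).eval y * ((qt t) i).eval y)
          - ∫ y in (x (i-1))..(x i), f (((u t) i).eval y) * ((ut t) i).eval y)
        (Set.Icc (0:ℝ) T) t := by
      intro i _
      have h1 : HasDerivWithinAt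
          (fun s => ∫ y in (x (i-1))..(x i), ((q s) i).eval y * ((q s) i).eval y)
          (∫ y in (x (i-1))..(x i), (((qt t) i).eval y * ((q t) i).eval y
            + ((q t) i).eval y * ((qt t) i).eval y)) (Set.Icc (0:ℝ) T) t :=
        DGAux.ip_mul_deriv (kA := k) (kB := k) ht (fun s hs => hS.degq s hs i)
          (fun s hs => hS.degq s hs i) (hq t ht i).1 (hq t ht i).1
          (hq t ht i).2 (hq t ht i).2 _ _
      have h2 := DGAux.vterm hf hV ht (fun s hs => hS.degu s hs i) (hu t ht i).1
        (hu t ht i).2 (x (i-1)) (x i)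
      have hcomb := (h1.const_mul (ε/2)).sub h2
      have hval : (ε/2) * (∫ y in (x (i-1))..(x i), (((qt t) i).eval y * ((q t) i).eval y
            + ((q t) i).eval y * ((qt t) i).eval y))
          - (∫ y in (x (i-1))..(x i), f (((u t) i).eval y) * ((ut t) i).eval y)
          = ε * (∫ y in (x (i-1))..(x i), ((q t) i).eval y * ((qt t) i).eval y)
            - ∫ y in (x (i-1))..(x i), f (((u t) i).eval y) * ((ut t) i).eval y := by
        have : (∫ y in (x (i-1))..(x i), (((qt t) i).eval y * ((q t) i).eval y
            + ((q t) i).eval y * ((qt t) i).eval y))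
            = 2 * ∫ y in (x (i-1))..(x i), ((q t) i).eval y * ((qt t) i).eval y := by
          rw [← intervalIntegral.integral_const_mul]
          exact intervalIntegral.integral_congr fun y _ => by ring
        rw [this]; ring
      have hfun : ∀ s : ℝ, (ε/2) * (∫ y in (x (i-1))..(x i), ((q s) i).eval y * ((q s) i).eval y)
          - (∫ y in (x (i-1))..(x i), V (((u s) i).eval y))
          = ∫ y in (x (i-1))..(x i), ((ε/2) * ((q s) i).eval y ^ 2 - V (((u s) i).eval y)) := by
        intro s
        have hi1 : IntervalIntegrable (fun y => ε/2 * ((q s i).eval y * (q s i).eval y))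
            MeasureTheory.volume (x (i-1)) (x i) :=
          (continuous_const.mul ((q s i).continuous.mul (q s i).continuous)).intervalIntegrable _ _
        have hi2 : IntervalIntegrable (fun y => V ((u s i).eval y))
            MeasureTheory.volume (x (i-1)) (x i) :=
          (hVcont.comp (u s i).continuous).intervalIntegrable _ _
        rw [← intervalIntegral.integral_const_mul, ← intervalIntegral.integral_sub hi1 hi2]
        exact intervalIntegral.integral_congr fun y _ => by ring
      rw [← hval]
      exact hcomb.congr (fun s _ => (hfun s).symm) (hfun t).symm
    have hsum := HasDerivWithinAt.fun_sum hDi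
    have h0 : (∑ i ∈ Finset.Icc 1 N,
        (ε * (∫ y in (x (i-1))..(x i), ((q t) i).eval y * ((qt t) i).eval y)
          - ∫ y in (x (i-1))..(x i), f (((u t) i).eval y) * ((ut t) i).eval y)) = 0 := by
      rw [Finset.sum_sub_distrib, ← Finset.mul_sum]
      exact KEY t ht
    rw [h0] at hsum
    exact hsum
  -- conclude constancy
  intro t₁ h₁ t₂ h₂
  have hbd := Convex.norm_image_sub_le_of_norm_hasDerivWithin_le (C := 0)
    (f' := fun _ => (0:ℝ)) (fun s hs => hE0 s hs) (fun s _ => by simp)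
    (convex_Icc (0:ℝ) T) h₁ h₂
  rw [zero_mul] at hbd
  have := norm_le_zero_iff.1 hbd
  have heq := sub_eq_zero.1 this
  exact heq.symm
end
end

section
/- Energy-derivative identity (intermediate step in the proof of Lemma 2.1(ii)): Suppose (u_h, q_h, p_h) together with numerical traces û_h, q̂_h, p̂_h satisfy the semidiscrete DG scheme with zero source. Then for every t ∈ [0,T], (1/2) d/dt Σ_{i=1}^N ∫_{I_i} u_h(x,t)² dx = Σ_{i=1}^N ( ⟦V(u_h)⟧ − {Π f(u_h)} ⟦u_h⟧ + (⟦Π f(u_h)⟧ − ⟦p_h⟧)(û_h − {u_h}) − ⟦u_h⟧(p̂_h − {p_h}) + ε ⟦q_h⟧(q̂_h − {q_h}) )(x_i). -/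
open Polynomial Set

noncomputable section

section Aux

open Polynomial Set intervalIntegral

namespace DGaux

lemma integral_mul_eq (α β : ℝ) (k : ℕ) (P Q : ℝ[X]) (hP : P.natDegree ≤ k) (hQ : Q.natDegree ≤ k) :
    (∫ y in α..β, P.eval y * Q.eval y) =
      ∑ j ∈ Finset.range (k+1), ∑ l ∈ Finset.range (k+1),
        P.eval (j:ℝ) * Q.eval (l:ℝ) *
          ∫ y in α..β, (Lagrange.basis (Finset.range (k+1)) (Nat.cast : ℕ → ℝ) j).eval y *
            (Lagrange.basis (Finset.range (k+1)) (Nat.cast : ℕ → ℝ) l).eval y := by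
  have hinj : Set.InjOn (Nat.cast : ℕ → ℝ) (Finset.range (k+1)) :=
    Set.injOn_of_injective Nat.cast_injective
  have hdeg : ∀ R : ℝ[X], R.natDegree ≤ k → R.degree < (Finset.range (k+1)).card := by
    intro R hR
    rw [Finset.card_range]
    exact lt_of_le_of_lt Polynomial.degree_le_natDegree
      (by exact_mod_cast Nat.lt_succ_of_le hR)
  have hPe : ∀ y : ℝ, P.eval y = ∑ j ∈ Finset.range (k+1),
      P.eval (j:ℝ) * (Lagrange.basis (Finset.range (k+1)) (Nat.cast : ℕ → ℝ) j).eval y := by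
    intro y
    conv_lhs => rw [Lagrange.eq_interpolate hinj (hdeg P hP)]
    simp [Lagrange.interpolate_apply, Polynomial.eval_finset_sum]
  have hQe : ∀ y : ℝ, Q.eval y = ∑ l ∈ Finset.range (k+1),
      Q.eval (l:ℝ) * (Lagrange.basis (Finset.range (k+1)) (Nat.cast : ℕ → ℝ) l).eval y := by
    intro y
    conv_lhs => rw [Lagrange.eq_interpolate hinj (hdeg Q hQ)]
    simp [Lagrange.interpolate_apply, Polynomial.eval_finset_sum]
  have key : ∀ y : ℝ, P.eval y * Q.eval y = ∑ j ∈ Finset.range (k+1), ∑ l ∈ Finset.range (k+1),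
      P.eval (j:ℝ) * Q.eval (l:ℝ) *
        ((Lagrange.basis (Finset.range (k+1)) (Nat.cast : ℕ → ℝ) j).eval y *
         (Lagrange.basis (Finset.range (k+1)) (Nat.cast : ℕ → ℝ) l).eval y) := by
    intro y
    rw [hPe y, hQe y, Finset.sum_mul_sum]
    exact Finset.sum_congr rfl fun j _ => Finset.sum_congr rfl fun l _ => by ring
  calc (∫ y in α..β, P.eval y * Q.eval y)
      = ∫ y in α..β, ∑ j ∈ Finset.range (k+1), ∑ l ∈ Finset.range (k+1),
          P.eval (j:ℝ) * Q.eval (l:ℝ) *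
            ((Lagrange.basis (Finset.range (k+1)) (Nat.cast : ℕ → ℝ) j).eval y *
             (Lagrange.basis (Finset.range (k+1)) (Nat.cast : ℕ → ℝ) l).eval y) := by
        simp_rw [key]
    _ = ∑ j ∈ Finset.range (k+1), ∑ l ∈ Finset.range (k+1),
          P.eval (j:ℝ) * Q.eval (l:ℝ) *
          ∫ y in α..β, (Lagrange.basis (Finset.range (k+1)) (Nat.cast : ℕ → ℝ) j).eval y *
            (Lagrange.basis (Finset.range (k+1)) (Nat.cast : ℕ → ℝ) l).eval y := by
        rw [intervalIntegral.integral_finset_sum]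
        · refine Finset.sum_congr rfl fun j _ => ?_
          rw [intervalIntegral.integral_finset_sum]
          · exact Finset.sum_congr rfl fun l _ => intervalIntegral.integral_const_mul _ _
          · intro l _
            exact (continuous_const.mul ((Polynomial.continuous _).mul
              (Polynomial.continuous _))).intervalIntegrable α β
        · intro j _
          apply Continuous.intervalIntegrable
          exact continuous_finset_sum _ fun l _ => continuous_const.mul
            ((Polynomial.continuous _).mul (Polynomial.continuous _))

/-- derivative of the squared L² norm of a polynomial family -/
lemma hasDeriv_int_sq (α β : ℝ) (k : ℕ) {s : Set ℝ} {t : ℝ} (P : ℝ → ℝ[X]) (Pt : ℝ[X])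
    (hdeg : ∀ τ ∈ s, (P τ).natDegree ≤ k) (hdegt : Pt.natDegree ≤ k) (ht : t ∈ s)
    (hd : ∀ y : ℝ, HasDerivWithinAt (fun τ => (P τ).eval y) (Pt.eval y) s t) :
    HasDerivWithinAt (fun τ => ∫ y in α..β, (P τ).eval y ^ 2)
      (2 * ∫ y in α..β, Pt.eval y * (P t).eval y) s t := by
  have hG : HasDerivWithinAt
      (fun τ => ∑ j ∈ Finset.range (k+1), ∑ l ∈ Finset.range (k+1),
        (P τ).eval (j:ℝ) * (P τ).eval (l:ℝ) *
          ∫ y in α..β, (Lagrange.basis (Finset.range (k+1)) (Nat.cast : ℕ → ℝ) j).eval y *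
            (Lagrange.basis (Finset.range (k+1)) (Nat.cast : ℕ → ℝ) l).eval y)
      (∑ j ∈ Finset.range (k+1), ∑ l ∈ Finset.range (k+1),
        (Pt.eval (j:ℝ) * (P t).eval (l:ℝ) + (P t).eval (j:ℝ) * Pt.eval (l:ℝ)) *
          ∫ y in α..β, (Lagrange.basis (Finset.range (k+1)) (Nat.cast : ℕ → ℝ) j).eval y *
            (Lagrange.basis (Finset.range (k+1)) (Nat.cast : ℕ → ℝ) l).eval y) s t := by
    refine HasDerivWithinAt.fun_sum fun j _ => ?_
    refine HasDerivWithinAt.fun_sum fun l _ => ?_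
    exact ((hd (j:ℝ)).mul (hd (l:ℝ))).mul_const _
  have hval : (∑ j ∈ Finset.range (k+1), ∑ l ∈ Finset.range (k+1),
        (Pt.eval (j:ℝ) * (P t).eval (l:ℝ) + (P t).eval (j:ℝ) * Pt.eval (l:ℝ)) *
          ∫ y in α..β, (Lagrange.basis (Finset.range (k+1)) (Nat.cast : ℕ → ℝ) j).eval y *
            (Lagrange.basis (Finset.range (k+1)) (Nat.cast : ℕ → ℝ) l).eval y)
      = 2 * ∫ y in α..β, Pt.eval y * (P t).eval y := by
    have h1 := integral_mul_eq α β k Pt (P t) hdegt (hdeg t ht)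
    have h2 := integral_mul_eq α β k (P t) Pt (hdeg t ht) hdegt
    have h12 : (∫ y in α..β, (P t).eval y * Pt.eval y)
        = ∫ y in α..β, Pt.eval y * (P t).eval y := by
      apply intervalIntegral.integral_congr; intro y _; ring
    rw [two_mul]
    nth_rewrite 1 [h1]
    rw [← h12, h2, ← Finset.sum_add_distrib]
    refine Finset.sum_congr rfl fun j _ => ?_
    rw [← Finset.sum_add_distrib]
    exact Finset.sum_congr rfl fun l _ => by ring
  rw [← hval]
  refine hG.congr (fun τ hτ => ?_) ?_
  · have := integral_mul_eq α β k (P τ) (P τ) (hdeg τ hτ) (hdeg τ hτ)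
    simpa [sq] using this
  · have := integral_mul_eq α β k (P t) (P t) (hdeg t ht) (hdeg t ht)
    simpa [sq] using this

/-- polynomial integration by parts -/
lemma poly_ibp (α β : ℝ) (P Q : ℝ[X]) :
    (∫ y in α..β, P.eval y * Q.derivative.eval y)
      + ∫ y in α..β, P.derivative.eval y * Q.eval y
      = P.eval β * Q.eval β - P.eval α * Q.eval α := by
  have h : ∀ y ∈ uIcc α β, HasDerivAt (fun z => P.eval z * Q.eval z)
      (P.derivative.eval y * Q.eval y + P.eval y * Q.derivative.eval y) y := by
    intro y _
    exact (P.hasDerivAt y).mul (Q.hasDerivAt y)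
  have hint : IntervalIntegrable
      (fun y => P.derivative.eval y * Q.eval y + P.eval y * Q.derivative.eval y)
      MeasureTheory.volume α β :=
    (((Polynomial.continuous _).mul (Polynomial.continuous _)).add
      ((Polynomial.continuous _).mul (Polynomial.continuous _))).intervalIntegrable α β
  have := intervalIntegral.integral_eq_sub_of_hasDerivAt h hint
  rw [intervalIntegral.integral_add (f := fun y => P.derivative.eval y * Q.eval y)
    (g := fun y => P.eval y * Q.derivative.eval y)
    (((Polynomial.continuous _).mul (Polynomial.continuous _)).intervalIntegrable α β)
    (((Polynomial.continuous _).mul (Polynomial.continuous _)).intervalIntegrable α β)] at this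
  linarith

/-- FTC for `V ∘ P` -/
lemma poly_ftcV (α β : ℝ) (f V : ℝ → ℝ) (hf : Continuous f)
    (hV : ∀ y : ℝ, HasDerivAt V (f y) y) (P : ℝ[X]) :
    (∫ y in α..β, f (P.eval y) * P.derivative.eval y)
      = V (P.eval β) - V (P.eval α) := by
  have h : ∀ y ∈ uIcc α β, HasDerivAt (fun z => V (P.eval z))
      (f (P.eval y) * P.derivative.eval y) y := by
    intro y _
    exact (hV (P.eval y)).comp y (P.hasDerivAt y)
  exact intervalIntegral.integral_eq_sub_of_hasDerivAt h
    (((hf.comp (Polynomial.continuous _)).mul (Polynomial.continuous _)).intervalIntegrable α β)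

lemma sum_Icc_shift (N : ℕ) (h : ℕ → ℝ) :
    ∑ i ∈ Finset.Icc 1 N, h i = ∑ i ∈ Finset.range N, h (i+1) := by
  induction N with
  | zero => simp
  | succ n ih => rw [Finset.sum_Icc_succ_top (by omega), ih, Finset.sum_range_succ]

/-- reindexing a shifted sum over `Icc 1 N` -/
lemma reindex {N : ℕ} (hN : 1 ≤ N) (g : ℕ → ℝ) :
    ∑ i ∈ Finset.Icc 1 N, g (i - 1)
      = ∑ i ∈ Finset.Icc 1 N, (if i = N then g 0 else g i) := by
  obtain ⟨m, rfl⟩ : ∃ m, N = m + 1 := ⟨N - 1, by omega⟩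
  rw [sum_Icc_shift, sum_Icc_shift]
  simp only [Nat.add_sub_cancel]
  rw [Finset.sum_range_succ', Finset.sum_range_succ, if_pos rfl]
  congr 1
  refine Finset.sum_congr rfl fun i hi => ?_
  rw [if_neg]
  have := Finset.mem_range.mp hi; omega

/-- reindexing node values: right limit form -/
lemma shift_node {N : ℕ} (hN : 1 ≤ N) (x : ℕ → ℝ) (H : ℕ → ℝ → ℝ) :
    ∑ i ∈ Finset.Icc 1 N, H i (x (i - 1))
      = ∑ i ∈ Finset.Icc 1 N, (if i = N then H 1 (x 0) else H (i+1) (x i)) := by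
  have h := reindex hN (fun j => H (j+1) (x j))
  calc ∑ i ∈ Finset.Icc 1 N, H i (x (i - 1))
      = ∑ i ∈ Finset.Icc 1 N, (fun j => H (j+1) (x j)) (i - 1) := by
        refine Finset.sum_congr rfl fun i hi => ?_
        have h1 : 1 ≤ i := (Finset.mem_Icc.mp hi).1
        have h2 : i - 1 + 1 = i := by omega
        simp only [h2]
    _ = ∑ i ∈ Finset.Icc 1 N, (if i = N then H 1 (x 0) else H (i+1) (x i)) := h

/-- `bt` of a trace equals the sum of trace times jump -/
lemma bt_eq {x : ℕ → ℝ} {N : ℕ} (hN : 1 ≤ N) {φ : ℕ → ℝ} (hφ : DG.IsTrace N φ)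
    (v : DG.Broken) :
    DG.bt x N φ v = ∑ i ∈ Finset.Icc 1 N, φ i * DG.jmp x N v i := by
  unfold DG.bt
  rw [Finset.sum_sub_distrib]
  have h2 : (∑ i ∈ Finset.Icc 1 N, φ (i-1) * (v i).eval (x (i-1)))
      = ∑ i ∈ Finset.Icc 1 N, φ i * DG.rv x N v i := by
    rw [shift_node hN x (fun j y => φ (j-1) * (v j).eval y)]
    · refine Finset.sum_congr rfl fun i hi => ?_
      by_cases h : i = N
      · simp only [h, if_pos rfl, DG.rv, if_pos rfl, Nat.add_sub_cancel]
        rw [← hφ]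
        norm_num
      · simp only [if_neg h, DG.rv, if_neg h, Nat.add_sub_cancel]
  rw [h2, ← Finset.sum_sub_distrib]
  refine Finset.sum_congr rfl fun i _ => ?_
  unfold DG.jmp DG.lv
  ring

/-- boundary sum reindexed via lv/rv -/
lemma bsum_eq {x : ℕ → ℝ} {N : ℕ} (hN : 1 ≤ N) (P Q : DG.Broken) :
    (∑ i ∈ Finset.Icc 1 N, ((P i).eval (x i) * (Q i).eval (x i)
        - (P i).eval (x (i-1)) * (Q i).eval (x (i-1))))
      = ∑ i ∈ Finset.Icc 1 N,
          (DG.lv x P i * DG.lv x Q i - DG.rv x N P i * DG.rv x N Q i) := by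
  rw [Finset.sum_sub_distrib, Finset.sum_sub_distrib]
  congr 1
  rw [shift_node hN x (fun j y => (P j).eval y * (Q j).eval y)]
  refine Finset.sum_congr rfl fun i hi => ?_
  by_cases h : i = N <;> simp [h, DG.rv]

/-- summed integration by parts -/
lemma ip_ibp {x : ℕ → ℝ} {N : ℕ} (hN : 1 ≤ N) (P Q : DG.Broken) :
    DG.ip x N (DG.ev P) (DG.ev (DG.dx Q)) + DG.ip x N (DG.ev (DG.dx P)) (DG.ev Q)
      = ∑ i ∈ Finset.Icc 1 N,
          (DG.lv x P i * DG.lv x Q i - DG.rv x N P i * DG.rv x N Q i) := by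
  unfold DG.ip DG.ev DG.dx
  rw [← Finset.sum_add_distrib]
  rw [← bsum_eq hN P Q]
  exact Finset.sum_congr rfl fun i _ => poly_ibp _ _ _ _

/-- summed FTC: `(f(ζ), ζ_x) = Σ ⟦V(ζ)⟧` -/
lemma ip_ftcV {x : ℕ → ℝ} {N : ℕ} (hN : 1 ≤ N) (f V : ℝ → ℝ) (hf : Continuous f)
    (hV : ∀ y : ℝ, HasDerivAt V (f y) y) (P : DG.Broken) :
    DG.ip x N (fun i y => f ((P i).eval y)) (DG.ev (DG.dx P))
      = ∑ i ∈ Finset.Icc 1 N, DG.jmpC x N V P i := by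
  unfold DG.ip DG.ev DG.dx
  calc (∑ i ∈ Finset.Icc 1 N, ∫ y in (x (i-1))..(x i),
          f ((P i).eval y) * (P i).derivative.eval y)
      = ∑ i ∈ Finset.Icc 1 N, (V ((P i).eval (x i)) - V ((P i).eval (x (i-1)))) :=
        Finset.sum_congr rfl fun i _ => poly_ftcV _ _ f V hf hV (P i)
    _ = ∑ i ∈ Finset.Icc 1 N, DG.jmpC x N V P i := by
        rw [Finset.sum_sub_distrib]
        rw [shift_node hN x (fun j y => V ((P j).eval y))]
        rw [← Finset.sum_sub_distrib]
        refine Finset.sum_congr rfl fun i hi => ?_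
        unfold DG.jmpC DG.lv DG.rv
        by_cases h : i = N <;> simp [h]

lemma ip_comm (x : ℕ → ℝ) (N : ℕ) (F G : ℕ → ℝ → ℝ) :
    DG.ip x N F G = DG.ip x N G F := by
  unfold DG.ip
  refine Finset.sum_congr rfl fun i _ => ?_
  apply intervalIntegral.integral_congr
  intro y _
  exact mul_comm _ _

/-- projection property in `ip` form -/
lemma proj_ip {x : ℕ → ℝ} {N k : ℕ} {f : ℝ → ℝ} (hf : Continuous f) {P Pf : DG.Broken}
    (hproj : DG.IsProj x N k f P Pf) (w : DG.Broken) (hw : DG.DegLE k w) :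
    DG.ip x N (fun i y => f ((P i).eval y)) (DG.ev w) = DG.ip x N (DG.ev Pf) (DG.ev w) := by
  unfold DG.ip DG.ev
  refine Finset.sum_congr rfl fun i hi => ?_
  have h := hproj.2 i hi (w i) (hw i)
  have e1 : IntervalIntegrable (fun y => (Pf i).eval y * (w i).eval y)
      MeasureTheory.volume (x (i-1)) (x i) :=
    ((Polynomial.continuous _).mul (Polynomial.continuous _)).intervalIntegrable _ _
  have e2 : IntervalIntegrable (fun y => f ((P i).eval y) * (w i).eval y)
      MeasureTheory.volume (x (i-1)) (x i) :=
    ((hf.comp (Polynomial.continuous _)).mul (Polynomial.continuous _)).intervalIntegrable _ _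
  have h' : (∫ y in (x (i-1))..(x i),
      ((Pf i).eval y * (w i).eval y - f ((P i).eval y) * (w i).eval y)) = 0 := by
    rw [← h]
    apply intervalIntegral.integral_congr
    intro y _
    ring
  rw [intervalIntegral.integral_sub e1 e2] at h'
  linarith

end DGaux

end Aux


/-- Energy-derivative identity (intermediate step in the proof of Lemma 2.1(ii)):
`(1/2) d/dt Σᵢ ∫_{Iᵢ} u_h² = Σᵢ (⟦V(u_h)⟧ - {Πf(u_h)}⟦u_h⟧ + (⟦Πf(u_h)⟧ - ⟦p_h⟧)(û_h - {u_h})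
 - ⟦u_h⟧(p̂_h - {p_h}) + ε⟦q_h⟧(q̂_h - {q_h}))(xᵢ)`. -/
theorem dg_energy_derivative_identity
    (a b : ℝ) (N k : ℕ) (x : ℕ → ℝ) (hmesh : DG.Mesh a b N x)
    (T ε : ℝ) (hT : 0 < T) (f V : ℝ → ℝ) (hf : Continuous f)
    (hV : ∀ y : ℝ, HasDerivAt V (f y) y)
    (u q p ut qt pt : ℝ → DG.Broken) (uh qh ph : ℝ → ℕ → ℝ)
    (hS : DG.Scheme x N k T ε f u q p ut qt pt uh qh ph)
    (Pf : ℝ → DG.Broken)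
    (hPf : ∀ t ∈ Set.Icc (0:ℝ) T, DG.IsProj x N k f (u t) (Pf t)) :
    ∀ t ∈ Set.Icc (0:ℝ) T,
      HasDerivWithinAt
        (fun s => (1/2) * ∑ i ∈ Finset.Icc 1 N,
          ∫ y in (x (i-1))..(x i), ((u s) i).eval y ^ 2)
        (∑ i ∈ Finset.Icc 1 N,
          (DG.jmpC x N V (u t) i - DG.avg x N (Pf t) i * DG.jmp x N (u t) i
            + (DG.jmp x N (Pf t) i - DG.jmp x N (p t) i) * (uh t i - DG.avg x N (u t) i)
            - DG.jmp x N (u t) i * (ph t i - DG.avg x N (p t) i)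
            + ε * DG.jmp x N (q t) i * (qh t i - DG.avg x N (q t) i)))
        (Set.Icc (0:ℝ) T) t := by
  intro t ht
  have hN := hmesh.hN
  -- the time derivative equals (u_t, u)
  have hder : HasDerivWithinAt
      (fun s => (1/2) * ∑ i ∈ Finset.Icc 1 N,
        ∫ y in (x (i-1))..(x i), ((u s) i).eval y ^ 2)
      (DG.ip x N (DG.ev (ut t)) (DG.ev (u t))) (Set.Icc (0:ℝ) T) t := by
    have h0 : HasDerivWithinAt
        (fun s => ∑ i ∈ Finset.Icc 1 N, ∫ y in (x (i-1))..(x i), ((u s) i).eval y ^ 2)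
        (∑ i ∈ Finset.Icc 1 N,
          2 * ∫ y in (x (i-1))..(x i), ((ut t) i).eval y * ((u t) i).eval y)
        (Set.Icc (0:ℝ) T) t := by
      refine HasDerivWithinAt.fun_sum fun i _ => ?_
      exact DGaux.hasDeriv_int_sq _ _ k (fun τ => (u τ) i) ((ut t) i)
        (fun τ hτ => hS.degu τ hτ i) (hS.degut t ht i) ht (fun y => hS.du t ht i y)
    have h1 := h0.const_mul (1/2 : ℝ)
    have h2 : DG.ip x N (DG.ev (ut t)) (DG.ev (u t))
        = (1/2 : ℝ) * ∑ i ∈ Finset.Icc 1 N,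
            2 * ∫ y in (x (i-1))..(x i), ((ut t) i).eval y * ((u t) i).eval y := by
      rw [DG.ip, Finset.mul_sum]
      refine Finset.sum_congr rfl fun i _ => ?_
      unfold DG.ev
      ring
    rw [h2]
    exact h1
  have A1 := hS.eq3 t ht (u t) (hS.degu t ht)
  have A2 := hS.eq1 t ht (p t) (hS.degp t ht)
  have A3 := hS.eq1 t ht (Pf t) ((hPf t ht).1)
  have A4 := hS.eq2 t ht (q t) (hS.degq t ht)
  have B1 := DGaux.bt_eq (x := x) hN (hS.trace_p t ht) (u t)
  have B2 := DGaux.bt_eq (x := x) hN (hS.trace_u t ht) (p t)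
  have B3 := DGaux.bt_eq (x := x) hN (hS.trace_u t ht) (Pf t)
  have B4 := DGaux.bt_eq (x := x) hN (hS.trace_q t ht) (q t)
  have C1 := DGaux.ip_ibp (x := x) hN (p t) (u t)
  have C2 := DGaux.ip_ibp (x := x) hN (u t) (Pf t)
  have C3 := DGaux.ip_ibp (x := x) hN (q t) (q t)
  have D1 := DGaux.ip_comm x N (DG.ev (u t)) (DG.ev (DG.dx (p t)))
  have D2 := DGaux.ip_comm x N (DG.ev (q t)) (DG.ev (p t))
  have D3 := DGaux.ip_comm x N (DG.ev (q t)) (DG.ev (Pf t))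
  have D4 := DGaux.ip_comm x N (DG.ev (DG.dx (u t))) (DG.ev (Pf t))
  have D5 := DGaux.ip_comm x N (DG.ev (DG.dx (q t))) (DG.ev (q t))
  have hdxu : DG.DegLE k (DG.dx (u t)) := fun i =>
    le_trans (Polynomial.natDegree_derivative_le _)
      (le_trans (Nat.sub_le _ _) (hS.degu t ht i))
  have E1 := DGaux.proj_ip hf (hPf t ht) (q t) (hS.degq t ht)
  have E2 := DGaux.proj_ip hf (hPf t ht) (DG.dx (u t)) hdxu
  have F := DGaux.ip_ftcV (x := x) hN f V hf hV (u t)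
  have hqdxq : DG.ip x N (DG.ev (q t)) (DG.ev (DG.dx (q t)))
      = (∑ i ∈ Finset.Icc 1 N, (DG.lv x (q t) i * DG.lv x (q t) i
          - DG.rv x N (q t) i * DG.rv x N (q t) i)) / 2 := by
    linarith [C3, D5]
  have hE1 : ε * DG.ip x N (DG.ev (q t)) (DG.ev (DG.dx (q t)))
      = ε * ((∑ i ∈ Finset.Icc 1 N, (DG.lv x (q t) i * DG.lv x (q t) i
          - DG.rv x N (q t) i * DG.rv x N (q t) i)) / 2) := by
    rw [hqdxq]
  have hE2 : ε * DG.bt x N (qh t) (q t)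
      = ε * ∑ i ∈ Finset.Icc 1 N, qh t i * DG.jmp x N (q t) i := by
    rw [B4]
  have key : DG.ip x N (DG.ev (ut t)) (DG.ev (u t))
      = ∑ i ∈ Finset.Icc 1 N,
        (DG.jmpC x N V (u t) i - DG.avg x N (Pf t) i * DG.jmp x N (u t) i
          + (DG.jmp x N (Pf t) i - DG.jmp x N (p t) i) * (uh t i - DG.avg x N (u t) i)
          - DG.jmp x N (u t) i * (ph t i - DG.avg x N (p t) i)
          + ε * DG.jmp x N (q t) i * (qh t i - DG.avg x N (q t) i)) := by
    have hTB : (∑ i ∈ Finset.Icc 1 N,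
        (DG.jmpC x N V (u t) i - DG.avg x N (Pf t) i * DG.jmp x N (u t) i
          + (DG.jmp x N (Pf t) i - DG.jmp x N (p t) i) * (uh t i - DG.avg x N (u t) i)
          - DG.jmp x N (u t) i * (ph t i - DG.avg x N (p t) i)
          + ε * DG.jmp x N (q t) i * (qh t i - DG.avg x N (q t) i)))
        = ∑ i ∈ Finset.Icc 1 N,
          ((DG.lv x (p t) i * DG.lv x (u t) i - DG.rv x N (p t) i * DG.rv x N (u t) i)
            - uh t i * DG.jmp x N (p t) i
            + uh t i * DG.jmp x N (Pf t) i
            - (DG.lv x (u t) i * DG.lv x (Pf t) i - DG.rv x N (u t) i * DG.rv x N (Pf t) i)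
            + DG.jmpC x N V (u t) i
            - ε * ((DG.lv x (q t) i * DG.lv x (q t) i
                - DG.rv x N (q t) i * DG.rv x N (q t) i) / 2)
            + ε * (qh t i * DG.jmp x N (q t) i)
            - ph t i * DG.jmp x N (u t) i) := by
      refine Finset.sum_congr rfl fun i _ => ?_
      simp only [DG.jmp, DG.avg]
      ring
    rw [hTB]
    have hcomb : (∑ i ∈ Finset.Icc 1 N,
          ((DG.lv x (p t) i * DG.lv x (u t) i - DG.rv x N (p t) i * DG.rv x N (u t) i)
            - uh t i * DG.jmp x N (p t) i
            + uh t i * DG.jmp x N (Pf t) i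
            - (DG.lv x (u t) i * DG.lv x (Pf t) i - DG.rv x N (u t) i * DG.rv x N (Pf t) i)
            + DG.jmpC x N V (u t) i
            - ε * ((DG.lv x (q t) i * DG.lv x (q t) i
                - DG.rv x N (q t) i * DG.rv x N (q t) i) / 2)
            + ε * (qh t i * DG.jmp x N (q t) i)
            - ph t i * DG.jmp x N (u t) i))
        = (∑ i ∈ Finset.Icc 1 N, (DG.lv x (p t) i * DG.lv x (u t) i
              - DG.rv x N (p t) i * DG.rv x N (u t) i))
          - (∑ i ∈ Finset.Icc 1 N, uh t i * DG.jmp x N (p t) i)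
          + (∑ i ∈ Finset.Icc 1 N, uh t i * DG.jmp x N (Pf t) i)
          - (∑ i ∈ Finset.Icc 1 N, (DG.lv x (u t) i * DG.lv x (Pf t) i
              - DG.rv x N (u t) i * DG.rv x N (Pf t) i))
          + (∑ i ∈ Finset.Icc 1 N, DG.jmpC x N V (u t) i)
          - ε * ((∑ i ∈ Finset.Icc 1 N, (DG.lv x (q t) i * DG.lv x (q t) i
              - DG.rv x N (q t) i * DG.rv x N (q t) i)) / 2)
          + ε * (∑ i ∈ Finset.Icc 1 N, qh t i * DG.jmp x N (q t) i)
          - (∑ i ∈ Finset.Icc 1 N, ph t i * DG.jmp x N (u t) i) := by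
      simp only [Finset.sum_sub_distrib, Finset.sum_add_distrib, ← Finset.mul_sum,
        ← Finset.sum_div]
    rw [hcomb]
    linarith [A1, A2, A3, A4, B1, B2, B3, C1, C2, D1, D2, D3, D4, E1, E2, F, hE1, hE2]
  exact key ▸ hder
end
end

section
/- Hamiltonian-derivative identity (intermediate step in the proof of Lemma 2.1(iii)): Suppose (u_h, q_h, p_h) together with numerical traces û_h, q̂_h, p̂_h satisfy the semidiscrete DG scheme with zero source, and that û_h and q_h depend differentiably on t. Then for every t ∈ [0,T], d/dt Σ_{i=1}^N ∫_{I_i} ( (ε/2) q_h(x,t)² − V(u_h(x,t)) ) dx = Σ_{i=1}^N ( ⟦p_h⟧(p̂_h − {p_h}) + ε ⟦q_h⟧ ∂_t(û_h − {u_h}) + ε ∂_t⟦u_h⟧ (q̂_h − {q_h}) )(x_i). -/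
open Polynomial Set

noncomputable section

namespace DGaux


lemma derivWithin_unique {T t : ℝ} (hT : 0 < T) (ht : t ∈ Set.Icc (0:ℝ) T)
    {f : ℝ → ℝ} {d1 d2 : ℝ} (h1 : HasDerivWithinAt f d1 (Set.Icc (0:ℝ) T) t)
    (h2 : HasDerivWithinAt f d2 (Set.Icc (0:ℝ) T) t) : d1 = d2 := by
  have hu := uniqueDiffOn_Icc hT t ht
  rw [← h1.derivWithin hu, ← h2.derivWithin hu]

lemma key_deriv {T : ℝ} (hT : 0 < T) {k : ℕ} {P : ℝ → Polynomial ℝ} {Q : Polynomial ℝ}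
    {t : ℝ} (ht : t ∈ Set.Icc (0:ℝ) T)
    (hdeg : ∀ s ∈ Set.Icc (0:ℝ) T, (P s).natDegree ≤ k)
    (hder : ∀ y : ℝ, HasDerivWithinAt (fun s => (P s).eval y) (Q.eval y) (Set.Icc (0:ℝ) T) t) :
    Q.natDegree ≤ k ∧
      ∀ j, HasDerivWithinAt (fun s => (P s).coeff j) (Q.coeff j) (Set.Icc (0:ℝ) T) t := by
  classical
  set v : Fin (k+1) → ℝ := fun m => (m : ℝ) with hv
  have hinj : Set.InjOn v (Finset.univ : Finset (Fin (k+1))) := by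
    intro a _ b _ hab
    have : ((a : ℕ) : ℝ) = ((b : ℕ) : ℝ) := hab
    exact Fin.ext (Nat.cast_injective this)
  have hcard : (Finset.univ : Finset (Fin (k+1))).card = k + 1 := by simp
  have hinterp : ∀ s ∈ Set.Icc (0:ℝ) T,
      P s = Lagrange.interpolate Finset.univ v (fun m => (P s).eval (v m)) := by
    intro s hs
    refine Lagrange.eq_interpolate hinj ?_
    rw [hcard]
    calc (P s).degree ≤ ((P s).natDegree : WithBot ℕ) := Polynomial.degree_le_natDegree
      _ ≤ (k : WithBot ℕ) := by exact_mod_cast hdeg s hs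
      _ < ((k+1 : ℕ) : WithBot ℕ) := by exact_mod_cast Nat.lt_succ_self k
  have hev : ∀ s ∈ Set.Icc (0:ℝ) T, ∀ y : ℝ,
      (P s).eval y = ∑ m : Fin (k+1), (P s).eval (v m) * (Lagrange.basis Finset.univ v m).eval y := by
    intro s hs y
    conv_lhs => rw [hinterp s hs]
    rw [Lagrange.interpolate_apply, Polynomial.eval_finset_sum]
    simp [Polynomial.eval_mul]
  have hco : ∀ s ∈ Set.Icc (0:ℝ) T, ∀ j : ℕ,
      (P s).coeff j = ∑ m : Fin (k+1), (P s).eval (v m) * (Lagrange.basis Finset.univ v m).coeff j := by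
    intro s hs j
    conv_lhs => rw [hinterp s hs]
    rw [Lagrange.interpolate_apply, Polynomial.finset_sum_coeff]
    simp [Polynomial.coeff_C_mul]
  set R : Polynomial ℝ :=
    Lagrange.interpolate Finset.univ v (fun m => Q.eval (v m)) with hR
  have hRdeg : R.natDegree ≤ k := by
    by_cases h0 : R = 0
    · simp [h0]
    · have hlt := Lagrange.degree_interpolate_lt (fun m => Q.eval (v m)) hinj
      rw [hcard, ← hR] at hlt
      have := Polynomial.natDegree_lt_iff_degree_lt h0 |>.mpr hlt
      omega
  have hRev : ∀ y : ℝ,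
      R.eval y = ∑ m : Fin (k+1), Q.eval (v m) * (Lagrange.basis Finset.univ v m).eval y := by
    intro y
    conv_lhs => rw [hR]
    rw [Lagrange.interpolate_apply, Polynomial.eval_finset_sum]
    simp [Polynomial.eval_mul]
  have hRco : ∀ j : ℕ,
      R.coeff j = ∑ m : Fin (k+1), Q.eval (v m) * (Lagrange.basis Finset.univ v m).coeff j := by
    intro j
    conv_lhs => rw [hR]
    rw [Lagrange.interpolate_apply, Polynomial.finset_sum_coeff]
    simp [Polynomial.coeff_C_mul]
  have hRder : ∀ y : ℝ, HasDerivWithinAt (fun s => (P s).eval y) (R.eval y)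
      (Set.Icc (0:ℝ) T) t := by
    intro y
    have hsum : HasDerivWithinAt
        (fun s => ∑ m : Fin (k+1), (P s).eval (v m) * (Lagrange.basis Finset.univ v m).eval y)
        (∑ m : Fin (k+1), Q.eval (v m) * (Lagrange.basis Finset.univ v m).eval y)
        (Set.Icc (0:ℝ) T) t :=
      HasDerivWithinAt.fun_sum (fun m _ => (hder (v m)).mul_const _)
    rw [← hRev y] at hsum
    exact hsum.congr (fun s hs => hev s hs y) (hev t ht y)
  have hQR : Q = R := by
    apply Polynomial.funext
    intro y
    exact derivWithin_unique hT ht (hder y) (hRder y)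
  refine ⟨hQR ▸ hRdeg, fun j => ?_⟩
  have hsum : HasDerivWithinAt
      (fun s => ∑ m : Fin (k+1), (P s).eval (v m) * (Lagrange.basis Finset.univ v m).coeff j)
      (∑ m : Fin (k+1), Q.eval (v m) * (Lagrange.basis Finset.univ v m).coeff j)
      (Set.Icc (0:ℝ) T) t :=
    HasDerivWithinAt.fun_sum (fun m _ => (hder (v m)).mul_const _)
  rw [← hRco j, ← hQR] at hsum
  exact hsum.congr (fun s hs => hco s hs j) (hco t ht j)




lemma integral_mul_eval {A B : Polynomial ℝ} {n : ℕ} (hA : A.natDegree < n)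
    (hB : B.natDegree < n) (c d : ℝ) :
    ∫ y in c..d, A.eval y * B.eval y
      = ∑ j ∈ Finset.range n, ∑ l ∈ Finset.range n,
          A.coeff j * B.coeff l * ∫ y in c..d, y^(j+l) := by
  have hpt : ∀ y : ℝ, A.eval y * B.eval y
      = ∑ j ∈ Finset.range n, ∑ l ∈ Finset.range n, A.coeff j * B.coeff l * y^(j+l) := by
    intro y
    rw [Polynomial.eval_eq_sum_range' hA, Polynomial.eval_eq_sum_range' hB, Finset.sum_mul_sum]
    refine Finset.sum_congr rfl fun j _ => Finset.sum_congr rfl fun l _ => ?_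
    rw [pow_add]; ring
  rw [intervalIntegral.integral_congr (g := fun y => ∑ j ∈ Finset.range n,
      ∑ l ∈ Finset.range n, A.coeff j * B.coeff l * y^(j+l)) (fun y _ => hpt y)]
  rw [intervalIntegral.integral_finset_sum (fun j _ => by
    apply Continuous.intervalIntegrable; continuity)]
  refine Finset.sum_congr rfl fun j _ => ?_
  rw [intervalIntegral.integral_finset_sum (fun l _ => by
    apply Continuous.intervalIntegrable; continuity)]
  refine Finset.sum_congr rfl fun l _ => ?_
  exact intervalIntegral.integral_const_mul _ _

lemma hasDerivWithinAt_integral_mul {T : ℝ} {k : ℕ} {t : ℝ} (ht : t ∈ Set.Icc (0:ℝ) T)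
    {P Q : ℝ → Polynomial ℝ} {Pt Qt : Polynomial ℝ}
    (hPdeg : ∀ s ∈ Set.Icc (0:ℝ) T, (P s).natDegree ≤ k)
    (hQdeg : ∀ s ∈ Set.Icc (0:ℝ) T, (Q s).natDegree ≤ k)
    (hPt : Pt.natDegree ≤ k) (hQt : Qt.natDegree ≤ k)
    (hP : ∀ j, HasDerivWithinAt (fun s => (P s).coeff j) (Pt.coeff j) (Set.Icc (0:ℝ) T) t)
    (hQ : ∀ j, HasDerivWithinAt (fun s => (Q s).coeff j) (Qt.coeff j) (Set.Icc (0:ℝ) T) t)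
    (c d : ℝ) :
    HasDerivWithinAt (fun s => ∫ y in c..d, (P s).eval y * (Q s).eval y)
      ((∫ y in c..d, Pt.eval y * (Q t).eval y) + ∫ y in c..d, (P t).eval y * Qt.eval y)
      (Set.Icc (0:ℝ) T) t := by
  have hsum : HasDerivWithinAt
      (fun s => ∑ j ∈ Finset.range (k+1), ∑ l ∈ Finset.range (k+1),
        (P s).coeff j * (Q s).coeff l * ∫ y in c..d, y^(j+l))
      (∑ j ∈ Finset.range (k+1), ∑ l ∈ Finset.range (k+1),
        (Pt.coeff j * (Q t).coeff l + (P t).coeff j * Qt.coeff l) * ∫ y in c..d, y^(j+l))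
      (Set.Icc (0:ℝ) T) t := by
    refine HasDerivWithinAt.fun_sum fun j _ => HasDerivWithinAt.fun_sum fun l _ => ?_
    exact ((hP j).mul (hQ l)).mul_const _
  have hval : (∑ j ∈ Finset.range (k+1), ∑ l ∈ Finset.range (k+1),
        (Pt.coeff j * (Q t).coeff l + (P t).coeff j * Qt.coeff l) * ∫ y in c..d, y^(j+l))
      = (∫ y in c..d, Pt.eval y * (Q t).eval y) + ∫ y in c..d, (P t).eval y * Qt.eval y := by
    rw [integral_mul_eval (Nat.lt_succ_of_le hPt) (Nat.lt_succ_of_le (hQdeg t ht)) c d,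
      integral_mul_eval (Nat.lt_succ_of_le (hPdeg t ht)) (Nat.lt_succ_of_le hQt) c d,
      ← Finset.sum_add_distrib]
    refine Finset.sum_congr rfl fun j _ => ?_
    rw [← Finset.sum_add_distrib]
    refine Finset.sum_congr rfl fun l _ => ?_
    ring
  rw [hval] at hsum
  refine hsum.congr (fun s hs => ?_) ?_
  · exact integral_mul_eval (Nat.lt_succ_of_le (hPdeg s hs)) (Nat.lt_succ_of_le (hQdeg s hs)) c d
  · exact integral_mul_eval (Nat.lt_succ_of_le (hPdeg t ht)) (Nat.lt_succ_of_le (hQdeg t ht)) c d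



set_option maxHeartbeats 1000000
set_option synthInstance.maxHeartbeats 1000000

lemma hasDerivWithinAt_integral_V {T : ℝ} {k : ℕ} {t : ℝ} (ht : t ∈ Set.Icc (0:ℝ) T)
    {f V : ℝ → ℝ} (hf : Continuous f) (hV : ∀ y : ℝ, HasDerivAt V (f y) y)
    {P : ℝ → Polynomial ℝ} {Pt : Polynomial ℝ}
    (hPdeg : ∀ s ∈ Set.Icc (0:ℝ) T, (P s).natDegree ≤ k)
    (hPt : Pt.natDegree ≤ k)
    (hP : ∀ j, HasDerivWithinAt (fun s => (P s).coeff j) (Pt.coeff j) (Set.Icc (0:ℝ) T) t)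
    (c d : ℝ) :
    HasDerivWithinAt (fun s => ∫ y in c..d, V ((P s).eval y))
      (∫ y in c..d, f ((P t).eval y) * Pt.eval y) (Set.Icc (0:ℝ) T) t := by
  classical
  set n := k + 1 with hn
  have hVd : Differentiable ℝ V := fun y => (hV y).differentiableAt
  have hVc : Continuous V := hVd.continuous
  set Lp : ℝ → (Fin n → ℝ) →L[ℝ] ℝ :=
    fun y => ∑ j : Fin n, y^(j:ℕ) • ContinuousLinearMap.proj j with hLp
  have hLp_apply : ∀ (y : ℝ) (w : Fin n → ℝ), Lp y w = ∑ j : Fin n, y^(j:ℕ) * w j := by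
    intro y w
    simp [hLp, ContinuousLinearMap.sum_apply, ContinuousLinearMap.smul_apply,
      ContinuousLinearMap.proj_apply, smul_eq_mul]
  have hLp_cont : Continuous Lp := by
    apply continuous_finset_sum
    intro j _
    exact (continuous_pow (j:ℕ)).smul continuous_const
  have hgev : ∀ (A : Polynomial ℝ), A.natDegree ≤ k → ∀ y : ℝ,
      Lp y (fun j : Fin n => A.coeff (j:ℕ)) = A.eval y := by
    intro A hA y
    rw [hLp_apply, Polynomial.eval_eq_sum_range' (Nat.lt_succ_of_le hA),
      ← Fin.sum_univ_eq_sum_range (fun i => A.coeff i * y ^ i)]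
    exact Finset.sum_congr rfl fun j _ => mul_comm _ _
  set B : ℝ := max |c| |d| with hB
  have hBnn : 0 ≤ B := le_trans (abs_nonneg c) (le_max_left _ _)
  have hyB : ∀ y ∈ Set.uIoc c d, |y| ≤ B := by
    intro y hy
    rcases le_total c d with h | h
    · rw [Set.uIoc_of_le h] at hy
      exact abs_le_max_abs_abs hy.1.le hy.2
    · rw [Set.uIoc_of_ge h] at hy
      exact (abs_le_max_abs_abs hy.1.le hy.2).trans (max_comm _ _ |>.le)
  set C₂ : ℝ := ∑ j : Fin n, B^(j:ℕ) with hC₂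
  have hC₂nn : 0 ≤ C₂ := Finset.sum_nonneg fun j _ => pow_nonneg hBnn _
  have hLp_norm : ∀ y ∈ Set.uIoc c d, ‖Lp y‖ ≤ C₂ := by
    intro y hy
    refine le_trans (norm_sum_le _ _) (Finset.sum_le_sum fun j _ => ?_)
    refine le_trans (norm_smul_le (y^(j:ℕ)) ((ContinuousLinearMap.proj j : (Fin n → ℝ) →L[ℝ] ℝ))) ?_
    have hproj : ‖(ContinuousLinearMap.proj (R := ℝ) (φ := fun _ : Fin n => ℝ) j)‖ ≤ 1 := by
      refine ContinuousLinearMap.opNorm_le_bound _ zero_le_one fun w => ?_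
      rw [one_mul]
      exact norm_le_pi_norm w j
    calc ‖y^(j:ℕ)‖ * ‖(ContinuousLinearMap.proj (R := ℝ) (φ := fun _ : Fin n => ℝ) j)‖
        ≤ ‖y^(j:ℕ)‖ * 1 := by
          exact mul_le_mul_of_nonneg_left hproj (norm_nonneg _)
      _ = |y|^(j:ℕ) := by rw [mul_one, Real.norm_eq_abs, abs_pow]
      _ ≤ B^(j:ℕ) := pow_le_pow_left₀ (abs_nonneg y) (hyB y hy) _
  set x₀ : Fin n → ℝ := fun j => (P t).coeff (j:ℕ) with hx₀
  set C₁ : ℝ := C₂ * (‖x₀‖ + 1) with hC₁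
  have hC₁nn : 0 ≤ C₁ := mul_nonneg hC₂nn (by positivity)
  have hLpval : ∀ y ∈ Set.uIoc c d, ∀ w ∈ Metric.ball x₀ 1, |Lp y w| ≤ C₁ := by
    intro y hy w hw
    have hwn : ‖w‖ ≤ ‖x₀‖ + 1 := by
      have := mem_ball_iff_norm.mp hw
      calc ‖w‖ = ‖x₀ + (w - x₀)‖ := by ring_nf
        _ ≤ ‖x₀‖ + ‖w - x₀‖ := norm_add_le _ _
        _ ≤ ‖x₀‖ + 1 := by linarith
    calc |Lp y w| ≤ ‖Lp y‖ * ‖w‖ := (Lp y).le_opNorm w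
      _ ≤ C₂ * (‖x₀‖ + 1) := by
          exact mul_le_mul (hLp_norm y hy) hwn (norm_nonneg _) hC₂nn
  obtain ⟨M, hM⟩ := (isCompact_Icc (a := -C₁) (b := C₁)).exists_bound_of_continuousOn
    hf.continuousOn
  have hMnn : 0 ≤ M := le_trans (norm_nonneg (f 0)) (hM 0 ⟨by linarith, by linarith⟩)
  have hx₀cont : Continuous fun y => Lp y x₀ := hLp_cont.clm_apply continuous_const
  have hΦ : HasFDerivAt (fun w => ∫ y in c..d, V (Lp y w))
      (∫ y in c..d, f (Lp y x₀) • Lp y) x₀ := by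
    apply intervalIntegral.hasFDerivAt_integral_of_dominated_of_fderiv_le
      (bound := fun _ => M * C₂) (F' := fun w y => f (Lp y w) • Lp y) (Metric.ball_mem_nhds x₀ one_pos)
    · filter_upwards with w
      exact (hVc.comp (hLp_cont.clm_apply continuous_const)).aestronglyMeasurable
    · exact (hVc.comp hx₀cont).intervalIntegrable _ _
    · exact ((hf.comp hx₀cont).smul hLp_cont).aestronglyMeasurable
    · filter_upwards with y hy w hw
      refine le_trans (norm_smul_le (f (Lp y w)) (Lp y)) ?_
      have h1 : ‖f (Lp y w)‖ ≤ M := by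
        refine hM (Lp y w) ?_
        have := abs_le.mp (hLpval y hy w hw)
        exact ⟨this.1, this.2⟩
      exact mul_le_mul h1 (hLp_norm y hy) (norm_nonneg _) hMnn
    · exact intervalIntegrable_const
    · filter_upwards with y hy w hw
      exact (hV (Lp y w)).comp_hasFDerivAt w (Lp y).hasFDerivAt
  have hcc : HasDerivWithinAt (fun s => fun j : Fin n => (P s).coeff (j:ℕ))
      (fun j : Fin n => Pt.coeff (j:ℕ)) (Set.Icc (0:ℝ) T) t :=
    hasDerivWithinAt_pi.mpr fun j => hP (j:ℕ)
  have hcomp := hΦ.comp_hasDerivWithinAt t hcc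
  have hint : IntervalIntegrable (fun y => f (Lp y x₀) • Lp y) MeasureTheory.volume c d :=
    ((hf.comp hx₀cont).smul hLp_cont).intervalIntegrable _ _
  have hval : (∫ y in c..d, f (Lp y x₀) • Lp y) (fun j : Fin n => Pt.coeff (j:ℕ))
      = ∫ y in c..d, f ((P t).eval y) * Pt.eval y := by
    rw [ContinuousLinearMap.intervalIntegral_apply hint]
    refine intervalIntegral.integral_congr fun y _ => ?_
    rw [ContinuousLinearMap.smul_apply, smul_eq_mul, hgev Pt hPt y, hgev (P t) (hPdeg t ht) y]
  rw [hval] at hcomp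
  refine hcomp.congr (fun s hs => ?_) ?_
  · refine intervalIntegral.integral_congr fun y _ => ?_
    simp only [Function.comp_apply]
    rw [hgev (P s) (hPdeg s hs) y]
  · refine intervalIntegral.integral_congr fun y _ => ?_
    simp only [Function.comp_apply]
    rw [hgev (P t) (hPdeg t ht) y]




lemma poly_ibp_s7 (W Z : Polynomial ℝ) (c d : ℝ) :
    (∫ y in c..d, Polynomial.eval y W * Polynomial.eval y Z.derivative)
      + ∫ y in c..d, Polynomial.eval y W.derivative * Polynomial.eval y Z
      = (W*Z).eval d - (W*Z).eval c := by
  rw [← intervalIntegral.integral_add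
    (f := fun y => Polynomial.eval y W * Polynomial.eval y Z.derivative)
    (g := fun y => Polynomial.eval y W.derivative * Polynomial.eval y Z)
    ((W.continuous.mul (Z.derivative).continuous).intervalIntegrable _ _)
    (((W.derivative).continuous.mul Z.continuous).intervalIntegrable _ _)]
  rw [← intervalIntegral.integral_deriv_eq_sub (f := fun y => (W*Z).eval y)
    (fun y _ => (Polynomial.hasDerivAt (W*Z) y).differentiableAt) ?hint]
  · refine intervalIntegral.integral_congr fun y _ => ?_
    rw [(Polynomial.hasDerivAt (W*Z) y).deriv, Polynomial.derivative_mul]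
    simp only [Polynomial.eval_add, Polynomial.eval_mul]
    ring
  case hint =>
    apply Continuous.intervalIntegrable
    have : (deriv fun y => (W*Z).eval y) = fun y => ((W*Z).derivative).eval y := by
      funext y; exact (Polynomial.hasDerivAt (W*Z) y).deriv
    rw [this]
    exact (W*Z).derivative.continuous
  
lemma cyclic_sum {N : ℕ} (hN : 1 ≤ N) (G H : ℕ → ℝ)
    (hmid : ∀ i, 1 ≤ i → i < N → H i = G i) (htop : H N = G 0) :
    ∑ i ∈ Finset.Icc 1 N, G (i-1) = ∑ i ∈ Finset.Icc 1 N, H i := by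
  have h1 : ∀ (F : ℕ → ℝ), ∑ i ∈ Finset.Icc 1 N, F i = ∑ i ∈ Finset.range N, F (1 + i) := by
    intro F
    rw [← Finset.Ico_add_one_right_eq_Icc, Finset.sum_Ico_eq_sum_range]
    simp
  rw [h1, h1]
  obtain ⟨M, rfl⟩ : ∃ M, N = M + 1 := ⟨N - 1, by omega⟩
  rw [Finset.sum_range_succ' (fun i => G (1 + i - 1)) M, Finset.sum_range_succ]
  have htop' : H (1 + M) = G (1 + 0 - 1) := by
    rw [(by congr 1; omega : H (1 + M) = H (M + 1)), htop]
  rw [htop']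
  congr 1
  refine Finset.sum_congr rfl fun i hi => ?_
  rw [hmid (1 + i) (by omega) (by simp at hi; omega)]
  congr 1 <;> omega

lemma bt_eq_jump_sum {x : ℕ → ℝ} {N : ℕ} (hN : 1 ≤ N) {φ : ℕ → ℝ} (hφ : φ 0 = φ N)
    (v : DG.Broken) :
    DG.bt x N φ v = ∑ i ∈ Finset.Icc 1 N, φ i * DG.jmp x N v i := by
  unfold DG.bt DG.jmp DG.lv
  rw [Finset.sum_sub_distrib]
  have h2 : ∑ i ∈ Finset.Icc 1 N, φ (i-1) * (v i).eval (x (i-1))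
      = ∑ i ∈ Finset.Icc 1 N, φ i * DG.rv x N v i := by
    have hG : ∑ i ∈ Finset.Icc 1 N, φ (i-1) * (v i).eval (x (i-1))
        = ∑ i ∈ Finset.Icc 1 N, (fun i => φ i * (v (i+1)).eval (x i)) (i-1) := by
      refine Finset.sum_congr rfl fun i hi => ?_
      simp only []
      have : i - 1 + 1 = i := by simp at hi; omega
      rw [this]
    rw [hG]
    refine cyclic_sum hN (fun i => φ i * (v (i+1)).eval (x i))
      (fun i => φ i * DG.rv x N v i) (fun i h1 h2 => ?_) ?_
    · simp only [DG.rv, if_neg (by omega : ¬ i = N)]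
    · simp [DG.rv, hφ]
  rw [h2, ← Finset.sum_sub_distrib]
  refine Finset.sum_congr rfl fun i _ => by ring

lemma elem_sum_eq_jump_sum {x : ℕ → ℝ} {N : ℕ} (hN : 1 ≤ N) (A : DG.Broken) :
    ∑ i ∈ Finset.Icc 1 N, ((A i).eval (x i) - (A i).eval (x (i-1)))
      = ∑ i ∈ Finset.Icc 1 N, DG.jmp x N A i := by
  unfold DG.jmp DG.lv
  rw [Finset.sum_sub_distrib, Finset.sum_sub_distrib]
  congr 1
  have hG : ∑ i ∈ Finset.Icc 1 N, (A i).eval (x (i-1))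
      = ∑ i ∈ Finset.Icc 1 N, (fun i => (A (i+1)).eval (x i)) (i-1) := by
    refine Finset.sum_congr rfl fun i hi => ?_
    simp only []
    have : i - 1 + 1 = i := by simp at hi; omega
    rw [this]
  rw [hG]
  refine cyclic_sum hN (fun i => (A (i+1)).eval (x i)) (DG.rv x N A) (fun i h1 h2 => ?_) ?_
  · simp only [DG.rv, if_neg (by omega : ¬ i = N)]
  · simp [DG.rv]

lemma jmp_mul (x : ℕ → ℝ) (N : ℕ) (A B : DG.Broken) (i : ℕ) :
    DG.jmp x N (fun i => A i * B i) i
      = DG.avg x N A i * DG.jmp x N B i + DG.jmp x N A i * DG.avg x N B i := by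
  by_cases h : i = N <;>
    simp [DG.jmp, DG.avg, DG.lv, DG.rv, h, Polynomial.eval_mul] <;> ring

lemma deriv_of_zero_on {T t : ℝ} (hT : 0 < T) (ht : t ∈ Set.Icc (0:ℝ) T)
    {Ψ : ℝ → ℝ} {D : ℝ} (h : HasDerivWithinAt Ψ D (Set.Icc (0:ℝ) T) t)
    (h0 : ∀ s ∈ Set.Icc (0:ℝ) T, Ψ s = 0) : D = 0 := by
  have hz : HasDerivWithinAt Ψ 0 (Set.Icc (0:ℝ) T) t :=
    (hasDerivWithinAt_const t _ (0:ℝ)).congr (fun s hs => h0 s hs) (h0 t ht)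
  have hu := uniqueDiffOn_Icc hT t ht
  rw [← h.derivWithin hu]
  exact hz.derivWithin hu


end DGaux

/-- Hamiltonian-derivative identity (intermediate step in the proof of Lemma 2.1(iii)):
`d/dt Σᵢ ∫_{Iᵢ} ((ε/2) q_h² - V(u_h)) = Σᵢ (⟦p_h⟧(p̂_h - {p_h}) + ε⟦q_h⟧ ∂ₜ(û_h - {u_h})
 + ε ∂ₜ⟦u_h⟧ (q̂_h - {q_h}))(xᵢ)`, where `uht` is the time derivative of the trace `û_h`. -/
theorem dg_hamiltonian_derivative_identity
    (a b : ℝ) (N k : ℕ) (x : ℕ → ℝ) (hmesh : DG.Mesh a b N x)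
    (T ε : ℝ) (hT : 0 < T) (f V : ℝ → ℝ) (hf : Continuous f)
    (hV : ∀ y : ℝ, HasDerivAt V (f y) y)
    (u q p ut qt pt : ℝ → DG.Broken) (uh qh ph : ℝ → ℕ → ℝ)
    (hS : DG.Scheme x N k T ε f u q p ut qt pt uh qh ph)
    (uht : ℝ → ℕ → ℝ)
    (hduh : ∀ t ∈ Set.Icc (0:ℝ) T, ∀ i,
      HasDerivWithinAt (fun s => uh s i) (uht t i) (Set.Icc (0:ℝ) T) t) :
    ∀ t ∈ Set.Icc (0:ℝ) T,
      HasDerivWithinAt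
        (fun s => ∑ i ∈ Finset.Icc 1 N,
          ∫ y in (x (i-1))..(x i), ((ε/2) * ((q s) i).eval y ^ 2 - V (((u s) i).eval y)))
        (∑ i ∈ Finset.Icc 1 N,
          (DG.jmp x N (p t) i * (ph t i - DG.avg x N (p t) i)
            + ε * DG.jmp x N (q t) i * (uht t i - DG.avg x N (ut t) i)
            + ε * DG.jmp x N (ut t) i * (qh t i - DG.avg x N (q t) i)))
        (Set.Icc (0:ℝ) T) t := by
  intro t ht
  have hN : 1 ≤ N := hmesh.hN
  have hVd : Differentiable ℝ V := fun y => (hV y).differentiableAt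
  have hVc : Continuous V := hVd.continuous
  -- coefficientwise differentiability
  have hq := fun i => DGaux.key_deriv (P := fun s => q s i) hT ht
    (fun s hs => hS.degq s hs i) (hS.dq t ht i)
  have hu := fun i => DGaux.key_deriv (P := fun s => u s i) hT ht
    (fun s hs => hS.degu s hs i) (hS.du t ht i)
  -- splitting of the integrand
  have hsplit : ∀ (s : ℝ) (i : ℕ),
      (∫ y in (x (i-1))..(x i), ((ε/2) * ((q s) i).eval y ^ 2 - V (((u s) i).eval y)))
        = (ε/2) * (∫ y in (x (i-1))..(x i), ((q s) i).eval y * ((q s) i).eval y)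
          - ∫ y in (x (i-1))..(x i), V (((u s) i).eval y) := by
    intro s i
    have h1 : IntervalIntegrable (fun y => (ε/2) * (((q s) i).eval y * ((q s) i).eval y))
        MeasureTheory.volume (x (i-1)) (x i) :=
      (continuous_const.mul ((q s i).continuous.mul (q s i).continuous)).intervalIntegrable _ _
    have h2 : IntervalIntegrable (fun y => V (((u s) i).eval y))
        MeasureTheory.volume (x (i-1)) (x i) :=
      (hVc.comp (u s i).continuous).intervalIntegrable _ _
    calc (∫ y in (x (i-1))..(x i), ((ε/2) * ((q s) i).eval y ^ 2 - V (((u s) i).eval y)))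
        = ∫ y in (x (i-1))..(x i),
            ((ε/2) * (((q s) i).eval y * ((q s) i).eval y) - V (((u s) i).eval y)) :=
          intervalIntegral.integral_congr fun y _ => by ring
      _ = (∫ y in (x (i-1))..(x i), (ε/2) * (((q s) i).eval y * ((q s) i).eval y))
            - ∫ y in (x (i-1))..(x i), V (((u s) i).eval y) :=
          intervalIntegral.integral_sub h1 h2
      _ = (ε/2) * (∫ y in (x (i-1))..(x i), ((q s) i).eval y * ((q s) i).eval y)
            - ∫ y in (x (i-1))..(x i), V (((u s) i).eval y) := by
          rw [intervalIntegral.integral_const_mul]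
  -- per-element derivative of the Hamiltonian integrand
  have hmi : ∀ i : ℕ, HasDerivWithinAt
      (fun s => ∫ y in (x (i-1))..(x i), ((ε/2) * ((q s) i).eval y ^ 2 - V (((u s) i).eval y)))
      ((ε/2) * ((∫ y in (x (i-1))..(x i), ((qt t) i).eval y * ((q t) i).eval y)
          + ∫ y in (x (i-1))..(x i), ((q t) i).eval y * ((qt t) i).eval y)
        - ∫ y in (x (i-1))..(x i), f (((u t) i).eval y) * ((ut t) i).eval y)
      (Set.Icc (0:ℝ) T) t := by
    intro i
    have hqq := DGaux.hasDerivWithinAt_integral_mul ht (fun s hs => hS.degq s hs i)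
      (fun s hs => hS.degq s hs i) (hq i).1 (hq i).1 (hq i).2 (hq i).2 (x (i-1)) (x i)
    have hVi := DGaux.hasDerivWithinAt_integral_V ht hf hV (fun s hs => hS.degu s hs i)
      (hu i).1 (hu i).2 (x (i-1)) (x i)
    exact ((hqq.const_mul (ε/2)).sub hVi).congr (fun s _ => hsplit s i) (hsplit t i)
  have hsum := HasDerivWithinAt.fun_sum (u := Finset.Icc 1 N) (fun i _ => hmi i)
  -- commutativity of ip
  have hcomm : ∀ F G : ℕ → ℝ → ℝ, DG.ip x N F G = DG.ip x N G F := by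
    intro F G
    unfold DG.ip
    exact Finset.sum_congr rfl fun i _ =>
      intervalIntegral.integral_congr fun y _ => mul_comm _ _
  -- differentiated first equation tested against q t
  have hA1 : DG.ip x N (DG.ev (qt t)) (DG.ev (q t))
      + DG.ip x N (DG.ev (ut t)) (DG.ev (DG.dx (q t))) - DG.bt x N (uht t) (q t) = 0 := by
    have hzero : ∀ j : ℕ, ∀ A : Polynomial ℝ,
        HasDerivWithinAt (fun _ : ℝ => A.coeff j) ((0 : Polynomial ℝ).coeff j)
          (Set.Icc (0:ℝ) T) t := by
      intro j A
      simpa using hasDerivWithinAt_const (𝕜 := ℝ) t (Set.Icc (0:ℝ) T) (A.coeff j)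
    have hD1 : HasDerivWithinAt (fun s => DG.ip x N (DG.ev (q s)) (DG.ev (q t)))
        (DG.ip x N (DG.ev (qt t)) (DG.ev (q t))) (Set.Icc (0:ℝ) T) t := by
      unfold DG.ip DG.ev
      refine HasDerivWithinAt.fun_sum fun i _ => ?_
      have := DGaux.hasDerivWithinAt_integral_mul (Q := fun _ => q t i) (Qt := 0) ht
        (fun s hs => hS.degq s hs i) (fun s _ => hS.degq t ht i) (hq i).1 (by simp)
        (hq i).2 (fun j => hzero j (q t i)) (x (i-1)) (x i)
      simpa using this
    have hD2 : HasDerivWithinAt (fun s => DG.ip x N (DG.ev (u s)) (DG.ev (DG.dx (q t))))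
        (DG.ip x N (DG.ev (ut t)) (DG.ev (DG.dx (q t)))) (Set.Icc (0:ℝ) T) t := by
      unfold DG.ip DG.ev DG.dx
      refine HasDerivWithinAt.fun_sum fun i _ => ?_
      have hdq : ∀ s ∈ Set.Icc (0:ℝ) T, ((q t i).derivative).natDegree ≤ k :=
        fun s _ => le_trans (Polynomial.natDegree_derivative_le _) (Nat.sub_le _ _ |>.trans
          (hS.degq t ht i))
      have := DGaux.hasDerivWithinAt_integral_mul (Q := fun _ => (q t i).derivative)
        (Qt := 0) ht (fun s hs => hS.degu s hs i) hdq (hu i).1 (by simp)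
        (hu i).2 (fun j => hzero j _) (x (i-1)) (x i)
      simpa using this
    have hD3 : HasDerivWithinAt (fun s => DG.bt x N (uh s) (q t))
        (DG.bt x N (uht t) (q t)) (Set.Icc (0:ℝ) T) t := by
      unfold DG.bt
      exact HasDerivWithinAt.fun_sum fun i _ =>
        ((hduh t ht i).mul_const _).sub ((hduh t ht (i-1)).mul_const _)
    exact DGaux.deriv_of_zero_on hT ht ((hD1.add hD2).sub hD3)
      (fun s hs => hS.eq1 s hs (q t) (hS.degq t ht))
  have hA2 := hS.eq2 t ht (ut t) (hS.degut t ht)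
  have hA3 := hS.eq3 t ht (p t) (hS.degp t ht)
  -- integration by parts
  have hIBP : ∀ W Z : DG.Broken,
      DG.ip x N (DG.ev W) (DG.ev (DG.dx Z)) + DG.ip x N (DG.ev (DG.dx W)) (DG.ev Z)
        = ∑ i ∈ Finset.Icc 1 N, DG.jmp x N (fun i => W i * Z i) i := by
    intro W Z
    unfold DG.ip DG.ev DG.dx
    rw [← Finset.sum_add_distrib, ← DGaux.elem_sum_eq_jump_sum hN (fun i => W i * Z i)]
    exact Finset.sum_congr rfl fun i _ => DGaux.poly_ibp_s7 (W i) (Z i) (x (i-1)) (x i)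
  -- trace of the time derivative of uh
  have htr_uht : uht t 0 = uht t N := by
    refine DGaux.derivWithin_unique hT ht (hduh t ht 0) ?_
    exact (hduh t ht N).congr (fun s hs => hS.trace_u s hs) (hS.trace_u t ht)
  -- boundary sums as jump sums
  have hbt_p : DG.bt x N (ph t) (p t)
      = ∑ i ∈ Finset.Icc 1 N, ph t i * DG.jmp x N (p t) i :=
    DGaux.bt_eq_jump_sum hN (hS.trace_p t ht) (p t)
  have hbt_q : DG.bt x N (qh t) (ut t)
      = ∑ i ∈ Finset.Icc 1 N, qh t i * DG.jmp x N (ut t) i :=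
    DGaux.bt_eq_jump_sum hN (hS.trace_q t ht) (ut t)
  have hbt_u : DG.bt x N (uht t) (q t)
      = ∑ i ∈ Finset.Icc 1 N, uht t i * DG.jmp x N (q t) i :=
    DGaux.bt_eq_jump_sum hN htr_uht (q t)
  -- jump-sum expansions of the boundary product sums
  have hSuq : (∑ i ∈ Finset.Icc 1 N, DG.jmp x N (fun i => ut t i * q t i) i)
      = ∑ i ∈ Finset.Icc 1 N, (DG.avg x N (ut t) i * DG.jmp x N (q t) i
          + DG.jmp x N (ut t) i * DG.avg x N (q t) i) :=
    Finset.sum_congr rfl fun i _ => DGaux.jmp_mul x N (ut t) (q t) i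
  have hSpp : (∑ i ∈ Finset.Icc 1 N, DG.jmp x N (fun i => p t i * p t i) i)
      = ∑ i ∈ Finset.Icc 1 N, (DG.avg x N (p t) i * DG.jmp x N (p t) i
          + DG.jmp x N (p t) i * DG.avg x N (p t) i) :=
    Finset.sum_congr rfl fun i _ => DGaux.jmp_mul x N (p t) (p t) i
  -- identify the raw derivative with ip-expressions
  have hDraw : (∑ i ∈ Finset.Icc 1 N,
        ((ε/2) * ((∫ y in (x (i-1))..(x i), ((qt t) i).eval y * ((q t) i).eval y)
            + ∫ y in (x (i-1))..(x i), ((q t) i).eval y * ((qt t) i).eval y)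
          - ∫ y in (x (i-1))..(x i), f (((u t) i).eval y) * ((ut t) i).eval y))
      = (ε/2) * DG.ip x N (DG.ev (qt t)) (DG.ev (q t))
        + (ε/2) * DG.ip x N (DG.ev (q t)) (DG.ev (qt t))
        - DG.ip x N (fun i y => f (((u t) i).eval y)) (DG.ev (ut t)) := by
    unfold DG.ip DG.ev
    rw [Finset.sum_sub_distrib, ← Finset.mul_sum, Finset.sum_add_distrib, mul_add]
  -- assemble the algebra
  have hkey : (∑ i ∈ Finset.Icc 1 N,
        ((ε/2) * ((∫ y in (x (i-1))..(x i), ((qt t) i).eval y * ((q t) i).eval y)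
            + ∫ y in (x (i-1))..(x i), ((q t) i).eval y * ((qt t) i).eval y)
          - ∫ y in (x (i-1))..(x i), f (((u t) i).eval y) * ((ut t) i).eval y))
      = ∑ i ∈ Finset.Icc 1 N,
          (DG.jmp x N (p t) i * (ph t i - DG.avg x N (p t) i)
            + ε * DG.jmp x N (q t) i * (uht t i - DG.avg x N (ut t) i)
            + ε * DG.jmp x N (ut t) i * (qh t i - DG.avg x N (q t) i)) := by
    have e1 : DG.ip x N (DG.ev (q t)) (DG.ev (qt t))
        = DG.ip x N (DG.ev (qt t)) (DG.ev (q t)) := hcomm _ _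
    have e2 : DG.ip x N (DG.ev (ut t)) (DG.ev (p t))
        = DG.ip x N (DG.ev (p t)) (DG.ev (ut t)) := hcomm _ _
    have e3 : DG.ip x N (DG.ev (q t)) (DG.ev (DG.dx (ut t)))
        = DG.ip x N (DG.ev (DG.dx (ut t))) (DG.ev (q t)) := hcomm _ _
    have e4 : DG.ip x N (DG.ev (DG.dx (p t))) (DG.ev (p t))
        = DG.ip x N (DG.ev (p t)) (DG.ev (DG.dx (p t))) := hcomm _ _
    have hI1 := hIBP (ut t) (q t)
    have hI2 := hIBP (p t) (p t)
    rw [hDraw, e1]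
    rw [hSuq] at hI1
    rw [hSpp] at hI2
    rw [hbt_u] at hA1
    rw [hbt_q] at hA2
    rw [hbt_p] at hA3
    have hfinal : (∑ i ∈ Finset.Icc 1 N,
          (DG.jmp x N (p t) i * (ph t i - DG.avg x N (p t) i)
            + ε * DG.jmp x N (q t) i * (uht t i - DG.avg x N (ut t) i)
            + ε * DG.jmp x N (ut t) i * (qh t i - DG.avg x N (q t) i)))
        = ε * (∑ i ∈ Finset.Icc 1 N, uht t i * DG.jmp x N (q t) i)
          + ε * (∑ i ∈ Finset.Icc 1 N, qh t i * DG.jmp x N (ut t) i)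
          + (∑ i ∈ Finset.Icc 1 N, ph t i * DG.jmp x N (p t) i)
          - ε * (∑ i ∈ Finset.Icc 1 N, (DG.avg x N (ut t) i * DG.jmp x N (q t) i
              + DG.jmp x N (ut t) i * DG.avg x N (q t) i))
          - (∑ i ∈ Finset.Icc 1 N, (DG.avg x N (p t) i * DG.jmp x N (p t) i
              + DG.jmp x N (p t) i * DG.avg x N (p t) i)) / 2 := by
      rw [Finset.mul_sum, Finset.mul_sum, Finset.mul_sum, Finset.sum_div,
        ← Finset.sum_add_distrib, ← Finset.sum_add_distrib, ← Finset.sum_sub_distrib,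
        ← Finset.sum_sub_distrib]
      exact Finset.sum_congr rfl fun i _ => by ring
    rw [hfinal]
    linear_combination ε * hA1 + hA2 - ε * hI1 - ε * e3 + e2 - hA3 + e4 / 2 - hI2 / 2
  exact hkey ▸ hsum
end
end
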